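/- arXiv:2509.02960 — 2 statements merged into one kernel-verified Lean document; each statement's English description precedes it below -/
import Mathlib

section
/- Every smooth 2-dimensional combinatorial cube in ℝ^2 (i.e., every smooth lattice quadrilateral) has two distinct parallel edges. -/
open Pointwise

noncomputable section

/-- A point of `ℝ^d` is a *lattice point* if all its coordinates are integers. -/
def IsLatticePoint {d : ℕ} (x : Fin d → ℝ) : Prop :=
  ∀ i, ∃ n : ℤ, x i = (n : ℝ)

/-- A *polytope* is the convex hull of finitely many points. -/
def IsPolytope {E : Type*} [AddCommGroup E] [Module ℝ E] (P : Set E) : Prop :=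
  ∃ V : Finset E, P = convexHull ℝ (V : Set E)

/-- A *lattice polytope* in `ℝ^d` is the convex hull of finitely many lattice points. -/
def IsLatticePolytope {d : ℕ} (P : Set (Fin d → ℝ)) : Prop :=
  ∃ V : Finset (Fin d → ℝ), (∀ v ∈ V, IsLatticePoint v) ∧
    P = convexHull ℝ (V : Set (Fin d → ℝ))

/-- The subset of `P` on which the linear functional `u` is maximized. -/
def maxFace {E : Type*} [AddCommGroup E] [Module ℝ E] (P : Set E) (u : E →ₗ[ℝ] ℝ) : Set E :=
  {x ∈ P | ∀ y ∈ P, u y ≤ u x}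

/-- `F` is a face of `P` if it is the maximizing set of some linear functional on `P`. -/
def IsFaceOf {E : Type*} [AddCommGroup E] [Module ℝ E] (P F : Set E) : Prop :=
  ∃ u : E →ₗ[ℝ] ℝ, F = maxFace P u

/-- The dimension of a subset: the rank of the direction of its affine span. -/
def dimSet {E : Type*} [AddCommGroup E] [Module ℝ E] (F : Set E) : ℕ :=
  Module.finrank ℝ (affineSpan ℝ F).direction

/-- Two sets are parallel if the directions (linear parts) of their affine spans coincide. -/
def AreParallel {E : Type*} [AddCommGroup E] [Module ℝ E] (F G : Set E) : Prop :=
  (affineSpan ℝ F).direction = (affineSpan ℝ G).direction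

/-- A facet is a face of codimension one. -/
def IsFacetOf {E : Type*} [AddCommGroup E] [Module ℝ E] (P F : Set E) : Prop :=
  IsFaceOf P F ∧ dimSet F + 1 = dimSet P

/-- A vertex of `P` is a point whose singleton is a face of `P`. -/
def IsVertexOf {E : Type*} [AddCommGroup E] [Module ℝ E] (P : Set E) (v : E) : Prop :=
  IsFaceOf P {v}

/-- An edge of `P` is a one-dimensional face of `P`. -/
def IsEdgeOf {E : Type*} [AddCommGroup E] [Module ℝ E] (P F : Set E) : Prop :=
  IsFaceOf P F ∧ dimSet F = 1

/-- A polytope in `ℝ^d` is simple if every vertex is contained in exactly `d` edges. -/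
def IsSimplePolytope {d : ℕ} (P : Set (Fin d → ℝ)) : Prop :=
  ∀ v : Fin d → ℝ, IsVertexOf P v →
    {F : Set (Fin d → ℝ) | IsEdgeOf P F ∧ v ∈ F}.ncard = d

/-- An integer vector is primitive if it is not a nontrivial integer multiple of
another integer vector (in particular it is nonzero). -/
def IsPrimitiveVector {d : ℕ} (u : Fin d → ℤ) : Prop :=
  ∀ (k : ℤ) (w : Fin d → ℤ), u = k • w → IsUnit k

/-- `u` is a primitive edge direction of `P` at the vertex `v`: a primitive lattice vector
pointing from `v` along an edge of `P` incident to `v`. -/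
def IsPrimitiveEdgeDirectionAt {d : ℕ} (P : Set (Fin d → ℝ)) (v : Fin d → ℝ)
    (u : Fin d → ℤ) : Prop :=
  IsPrimitiveVector u ∧
    ∃ F : Set (Fin d → ℝ), IsEdgeOf P F ∧ v ∈ F ∧
      ∃ ε : ℝ, 0 < ε ∧ (v + ε • fun i => (u i : ℝ)) ∈ F

/-- A lattice polytope is smooth if it is simple and, at each vertex, the primitive
edge directions form a `ℤ`-basis of `ℤ^d`. -/
def IsSmoothPolytope {d : ℕ} (P : Set (Fin d → ℝ)) : Prop :=
  IsLatticePolytope P ∧ IsSimplePolytope P ∧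
    ∀ v : Fin d → ℝ, IsVertexOf P v →
      ∃ b : Module.Basis (Fin d) ℤ (Fin d → ℤ), ∀ i, IsPrimitiveEdgeDirectionAt P v (b i)

/-- The unit cube `[0,1]^d`. -/
def unitCube (d : ℕ) : Set (Fin d → ℝ) := {x | ∀ i, x i ∈ Set.Icc (0 : ℝ) 1}

/-- A `d`-dimensional combinatorial cube: a `d`-dimensional lattice polytope whose face
poset is order-isomorphic to the face poset of the unit cube `[0,1]^d`. -/
def IsCombinatorialCube (d : ℕ) (C : Set (Fin d → ℝ)) : Prop :=
  IsLatticePolytope C ∧ dimSet C = d ∧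
    Nonempty ({F : Set (Fin d → ℝ) // IsFaceOf (unitCube d) F} ≃o
              {F : Set (Fin d → ℝ) // IsFaceOf C F})

/-- The pair `(P, Q)` has the Integer Decomposition Property: every lattice point of the
Minkowski sum `P + Q` is a sum of a lattice point of `P` and a lattice point of `Q`. -/
def IsIDPPair {d : ℕ} (P Q : Set (Fin d → ℝ)) : Prop :=
  ∀ x : Fin d → ℝ, IsLatticePoint x → x ∈ P + Q →
    ∃ p ∈ P, ∃ q ∈ Q, IsLatticePoint p ∧ IsLatticePoint q ∧ x = p + q

/-- `P` and `Q` are Minkowski equivalent (have the same normal fan): two linear functionals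
are maximized on the same face of `P` if and only if they are maximized on the same face
of `Q`. -/
def MinkowskiEquivalent {E : Type*} [AddCommGroup E] [Module ℝ E] (P Q : Set E) : Prop :=
  ∀ u v : E →ₗ[ℝ] ℝ, maxFace P u = maxFace P v ↔ maxFace Q u = maxFace Q v

/-- `P` is a `d`-dimensional prismatoid with top facet `T` and bottom facet `B`: a
`d`-dimensional lattice polytope whose face poset is order-isomorphic to the face poset of
a prism `Q × [0,1]` over a `(d-1)`-dimensional polytope `Q`, where `T` and `B` are the
faces corresponding to `Q × {1}` and `Q × {0}` respectively, and `T` and `B` are parallel. -/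
def IsPrismatoid (d : ℕ) (P T B : Set (Fin d → ℝ)) : Prop :=
  IsLatticePolytope P ∧ dimSet P = d ∧
    ∃ Q : Set (Fin (d - 1) → ℝ), IsPolytope Q ∧ dimSet Q = d - 1 ∧
      ∃ φ : {F : Set ((Fin (d - 1) → ℝ) × ℝ) // IsFaceOf (Q ×ˢ Set.Icc (0 : ℝ) 1) F} ≃o
            {F : Set (Fin d → ℝ) // IsFaceOf P F},
        (∃ hT : IsFaceOf (Q ×ˢ Set.Icc (0 : ℝ) 1) (Q ×ˢ ({1} : Set ℝ)),
            (φ ⟨Q ×ˢ ({1} : Set ℝ), hT⟩).1 = T) ∧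
        (∃ hB : IsFaceOf (Q ×ˢ Set.Icc (0 : ℝ) 1) (Q ×ˢ ({0} : Set ℝ)),
            (φ ⟨Q ×ˢ ({0} : Set ℝ), hB⟩).1 = B) ∧
        AreParallel T B

/-- The face `F_I^J` of the unit cube given by disjoint index sets `I` (coordinates pinned
to `0`) and `J` (coordinates pinned to `1`). -/
def cubeFace (d : ℕ) (I J : Set (Fin d)) : Set (Fin d → ℝ) :=
  {x ∈ unitCube d | (∀ k ∈ I, x k = 0) ∧ (∀ k ∈ J, x k = 1)}

/-- Under a fixed order isomorphism `φ` from the face poset of the unit cube to the face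
poset of `C`, the set `F` is the face of `C` corresponding to the face `F_I^J` of the
unit cube. -/
def IsCubeFaceImage {d : ℕ} {C : Set (Fin d → ℝ)}
    (φ : {F : Set (Fin d → ℝ) // IsFaceOf (unitCube d) F} ≃o
         {F : Set (Fin d → ℝ) // IsFaceOf C F})
    (I J : Set (Fin d)) (F : Set (Fin d → ℝ)) : Prop :=
  ∃ h : IsFaceOf (unitCube d) (cubeFace d I J), (φ ⟨cubeFace d I J, h⟩).1 = F

/-- The last coordinate index of `Fin d` (for `0 < d`). -/
def lastIdx (d : ℕ) (hd : 0 < d) : Fin d := ⟨d - 1, Nat.sub_lt hd Nat.one_pos⟩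

/-- The linear functional `x ↦ ⟨y, x⟩ = ∑ i, y i * x i` on `ℝ^d`. -/
def dotL {d : ℕ} (y : Fin d → ℝ) : (Fin d → ℝ) →ₗ[ℝ] ℝ :=
  ∑ i, y i • LinearMap.proj (R := ℝ) (φ := fun _ : Fin d => ℝ) i


namespace Aux

variable {E : Type*} [AddCommGroup E] [Module ℝ E]

/-- The finite set of maximizers of `u` among `V`. -/
def argmaxSet (V : Finset E) (u : E →ₗ[ℝ] ℝ) : Finset E :=
  V.filter (fun v => ∀ w ∈ V, u w ≤ u v)

lemma argmaxSet_subset (V : Finset E) (u : E →ₗ[ℝ] ℝ) : argmaxSet V u ⊆ V :=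
  Finset.filter_subset _ _

lemma argmaxSet_nonempty {V : Finset E} (hV : V.Nonempty) (u : E →ₗ[ℝ] ℝ) :
    (argmaxSet V u).Nonempty := by
  obtain ⟨b, hb, hmax⟩ := V.exists_max_image u hV
  exact ⟨b, Finset.mem_filter.2 ⟨hb, hmax⟩⟩

lemma mem_argmaxSet {V : Finset E} {u : E →ₗ[ℝ] ℝ} {v : E} :
    v ∈ argmaxSet V u ↔ v ∈ V ∧ ∀ w ∈ V, u w ≤ u v := Finset.mem_filter

lemma le_on_hull {V : Finset E} {u : E →ₗ[ℝ] ℝ} {b : E} (hb : ∀ w ∈ V, u w ≤ u b)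
    {x : E} (hx : x ∈ convexHull ℝ (V : Set E)) : u x ≤ u b := by
  have h : convexHull ℝ (V : Set E) ⊆ {w | u w ≤ u b} :=
    convexHull_min hb (convex_halfSpace_le u.isLinear _)
  exact h hx

lemma ge_on_hull {S : Finset E} {u : E →ₗ[ℝ] ℝ} {b : E} (hb : ∀ w ∈ S, u b ≤ u w)
    {x : E} (hx : x ∈ convexHull ℝ (S : Set E)) : u b ≤ u x := by
  have h : convexHull ℝ (S : Set E) ⊆ {w | u b ≤ u w} :=
    convexHull_min hb (convex_halfSpace_ge u.isLinear _)
  exact h hx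

lemma maxFace_convexHull (V : Finset E) (hV : V.Nonempty) (u : E →ₗ[ℝ] ℝ) :
    maxFace (convexHull ℝ (V : Set E)) u = convexHull ℝ ((argmaxSet V u : Finset E) : Set E) := by
  obtain ⟨b, hbS⟩ := argmaxSet_nonempty hV u
  obtain ⟨hbV, hbmax⟩ := mem_argmaxSet.1 hbS
  ext x
  constructor
  · rintro ⟨hxC, hxmax⟩
    have hub : u x = u b :=
      le_antisymm (le_on_hull hbmax hxC) (hxmax b (subset_convexHull ℝ _ hbV))
    rw [Finset.convexHull_eq] at hxC
    obtain ⟨w, hw0, hw1, hwx⟩ := hxC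
    have hsupp : ∀ y ∈ V, y ∉ argmaxSet V u → w y = 0 := by
      by_contra hcon
      push_neg at hcon
      obtain ⟨y0, hy0V, hy0S, hy0w⟩ := hcon
      have hy0lt : u y0 < u b := by
        rw [mem_argmaxSet] at hy0S
        push_neg at hy0S
        obtain ⟨w1, hw1V, hw1gt⟩ := hy0S hy0V
        exact lt_of_lt_of_le hw1gt (hbmax w1 hw1V)
      have hxval : u x = ∑ y ∈ V, w y * u y := by
        rw [← hwx, Finset.centerMass_eq_of_sum_1 _ _ hw1, map_sum]
        simp [smul_eq_mul]
      have hlt : ∑ y ∈ V, w y * u y < ∑ y ∈ V, w y * u b := by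
        refine Finset.sum_lt_sum (fun i hi => ?_) ⟨y0, hy0V, ?_⟩
        · exact mul_le_mul_of_nonneg_left (hbmax i hi) (hw0 i hi)
        · exact mul_lt_mul_of_pos_left hy0lt (lt_of_le_of_ne (hw0 y0 hy0V) (Ne.symm hy0w))
      have hsum : ∑ y ∈ V, w y * u b = u b := by
        rw [← Finset.sum_mul, hw1, one_mul]
      rw [hxval] at hub
      rw [hsum] at hlt
      linarith
    have hx2 : (argmaxSet V u).centerMass w id = x := by
      rw [← hwx]
      exact Finset.centerMass_subset _ (argmaxSet_subset V u) hsupp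
    have hsum2 : ∑ y ∈ argmaxSet V u, w y = 1 := by
      rw [← hw1]
      exact Finset.sum_subset (argmaxSet_subset V u) hsupp
    rw [← hx2]
    exact Finset.centerMass_mem_convexHull _ (fun i hi => hw0 i (argmaxSet_subset V u hi))
      (by rw [hsum2]; norm_num) (fun i hi => Finset.mem_coe.2 hi)
  · intro hx
    have hxC : x ∈ convexHull ℝ (V : Set E) :=
      convexHull_mono (by exact_mod_cast Finset.coe_subset.2 (argmaxSet_subset V u)) hx
    refine ⟨hxC, fun y hy => ?_⟩
    have hbx : u b ≤ u x :=
      ge_on_hull (fun s hs => (mem_argmaxSet.1 hs).2 b hbV) hx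
    exact le_trans (le_on_hull hbmax hy) hbx

lemma perturb (V : Finset E) (hV : V.Nonempty) (u w : E →ₗ[ℝ] ℝ) :
    ∃ t : ℝ, 0 < t ∧ argmaxSet V (u + t • w) = argmaxSet (argmaxSet V u) w := by
  classical
  set S := argmaxSet V u with hS
  obtain ⟨b, hbS⟩ := argmaxSet_nonempty hV u
  obtain ⟨hbV, hbmax⟩ := mem_argmaxSet.1 hbS
  obtain ⟨p, hpT⟩ := argmaxSet_nonempty ⟨b, hbS⟩ w
  obtain ⟨hpS, hpmax⟩ := mem_argmaxSet.1 hpT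
  have hub : ∀ s ∈ S, u s = u b := fun s hs =>
    le_antisymm (hbmax s ((argmaxSet_subset V u) hs)) ((mem_argmaxSet.1 hs).2 b hbV)
  set f : E → ℝ := fun v => (u b - u v) / (|w v - w p| + 1) with hf
  set Fs : Finset ℝ := insert 1 ((V \ S).image f) with hFs
  have hFsne : Fs.Nonempty := ⟨1, Finset.mem_insert_self _ _⟩
  set t : ℝ := Fs.min' hFsne with ht
  have hlt_not : ∀ v ∈ V, v ∉ S → u v < u b := by
    intro v hvV hvS
    rw [hS, mem_argmaxSet] at hvS
    push_neg at hvS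
    obtain ⟨w1, hw1V, hw1gt⟩ := hvS hvV
    exact lt_of_lt_of_le hw1gt (hbmax w1 hw1V)
  have hpos : ∀ r ∈ Fs, 0 < r := by
    intro r hr
    rcases Finset.mem_insert.1 hr with h1 | h2
    · rw [h1]; norm_num
    · obtain ⟨v, hv, rfl⟩ := Finset.mem_image.1 h2
      obtain ⟨hvV, hvS⟩ := Finset.mem_sdiff.1 hv
      exact div_pos (by linarith [hlt_not v hvV hvS]) (by positivity)
  have htpos : 0 < t := hpos _ (Fs.min'_mem hFsne)
  have hkey : ∀ v ∈ V, v ∉ S → u v + t * w v < u b + t * w p := by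
    intro v hvV hvS
    have htle : t ≤ f v := Fs.min'_le _ (Finset.mem_insert_of_mem
      (Finset.mem_image_of_mem f (Finset.mem_sdiff.2 ⟨hvV, hvS⟩)))
    have hd : (0:ℝ) < |w v - w p| + 1 := by positivity
    have h1 : t * (w v - w p) ≤ t * |w v - w p| :=
      mul_le_mul_of_nonneg_left (le_abs_self _) (le_of_lt htpos)
    have h2 : t * |w v - w p| < t * (|w v - w p| + 1) := by
      exact mul_lt_mul_of_pos_left (by linarith) htpos
    have h3 : t * (|w v - w p| + 1) ≤ f v * (|w v - w p| + 1) :=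
      mul_le_mul_of_nonneg_right htle (le_of_lt hd)
    have h4 : f v * (|w v - w p| + 1) = u b - u v := by
      rw [hf]; field_simp
    nlinarith
  refine ⟨t, htpos, ?_⟩
  have happ : ∀ x : E, (u + t • w) x = u x + t * w x := by
    intro x; simp [LinearMap.add_apply, LinearMap.smul_apply, smul_eq_mul]
  have hwp : ∀ s ∈ S, w s ≤ w p := fun s hs => (mem_argmaxSet.1 hpT).2 s hs
  ext v
  simp only [mem_argmaxSet, happ]
  constructor
  · rintro ⟨hvV, hvmax⟩
    have hple : u b + t * w p ≤ u v + t * w v := by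
      have h := hvmax p ((argmaxSet_subset V u) hpS)
      have hp2 : u p = u b := hub p hpS
      linarith
    have hvS : v ∈ S := by
      by_contra hvS
      exact absurd hple (not_le.2 (hkey v hvV hvS))
    have hwv : w p ≤ w v := by
      have := hub v hvS
      have := hple
      nlinarith [htpos]
    exact ⟨hvS, fun s hs => le_trans (hwp s hs) hwv⟩
  · rintro hvT
    obtain ⟨hvS, hvmax⟩ := hvT
    refine ⟨(argmaxSet_subset V u) hvS, fun y hy => ?_⟩
    by_cases hyS : y ∈ S
    · have h1 : u y = u v := by rw [hub y hyS, hub v hvS]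
      have h2 : w y ≤ w v := hvmax y hyS
      nlinarith [htpos]
    · have h1 := hkey y hy hyS
      have h2 : w p ≤ w v := hvmax p hpS
      have h3 : u v = u b := hub v hvS
      nlinarith [htpos]



abbrev E2 := Fin 2 → ℝ

lemma maxFace_subset {E : Type*} [AddCommGroup E] [Module ℝ E] (P : Set E) (u : E →ₗ[ℝ] ℝ) :
    maxFace P u ⊆ P := fun _ hx => hx.1

lemma vertex_mem {E : Type*} [AddCommGroup E] [Module ℝ E] {P : Set E} {v : E}
    (hv : IsVertexOf P v) : v ∈ P := by
  obtain ⟨u, hu⟩ := hv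
  have : v ∈ maxFace P u := by rw [← hu]; exact rfl
  exact this.1

lemma vertex_strict {E : Type*} [AddCommGroup E] [Module ℝ E] {P : Set E} {v : E}
    (hv : IsVertexOf P v) :
    ∃ u : E →ₗ[ℝ] ℝ, (∀ y ∈ P, u y ≤ u v) ∧ ∀ y ∈ P, u y = u v → y = v := by
  obtain ⟨u, hu⟩ := hv
  have hvm : v ∈ maxFace P u := by rw [← hu]; exact rfl
  refine ⟨u, hvm.2, fun y hy hye => ?_⟩
  have : y ∈ maxFace P u := ⟨hy, fun z hz => hye ▸ hvm.2 z hz⟩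
  rw [← hu] at this
  exact this

lemma vertex_mem_segment {E : Type*} [AddCommGroup E] [Module ℝ E] {P : Set E} {v p q : E}
    (hv : IsVertexOf P v) (hp : p ∈ P) (hq : q ∈ P) (hmem : v ∈ segment ℝ p q) :
    v = p ∨ v = q := by
  obtain ⟨u, humax, hustrict⟩ := vertex_strict hv
  obtain ⟨a, b, ha, hb, hab, heq⟩ := hmem
  by_cases ha0 : a = 0
  · right
    have : b = 1 := by rw [ha0] at hab; linarith
    rw [ha0, this, zero_smul, one_smul, zero_add] at heq
    exact heq.symm
  · have hapos : 0 < a := lt_of_le_of_ne ha (Ne.symm ha0)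
    have hval : a * u p + b * u q = u v := by
      rw [← heq]; simp [map_add, map_smul, smul_eq_mul]
    have hup : u p ≤ u v := humax p hp
    have huq : u q ≤ u v := humax q hq
    have hupe : u p = u v := by
      by_contra hne
      have h1 : u p < u v := lt_of_le_of_ne hup hne
      have h2 : a * u p < a * u v := by nlinarith
      have h3 : b * u q ≤ b * u v := mul_le_mul_of_nonneg_left huq hb
      have h4 : a * u v + b * u v = u v := by rw [← add_mul, hab, one_mul]
      linarith
    exact Or.inl ((hustrict p hp hupe).symm)

lemma dimSet_singleton {E : Type*} [AddCommGroup E] [Module ℝ E] (v : E) :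
    dimSet ({v} : Set E) = 0 := by
  unfold dimSet
  rw [direction_affineSpan, vectorSpan_singleton]
  exact finrank_bot ℝ E

lemma direction_segment {E : Type*} [AddCommGroup E] [Module ℝ E] (p q : E) :
    (affineSpan ℝ (segment ℝ p q)).direction = ℝ ∙ (q - p) := by
  rw [← convexHull_pair, affineSpan_convexHull, direction_affineSpan, vectorSpan_pair_rev,
    vsub_eq_sub]

/-- Every face of a polytope contains a vertex (in dimension 2). -/
lemma face_has_vertex {V : Finset E2} (hV : V.Nonempty) {F : Set E2}
    (hF : IsFaceOf (convexHull ℝ (V : Set E2)) F) :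
    ∃ v : E2, v ∈ V ∧ IsVertexOf (convexHull ℝ (V : Set E2)) v ∧ v ∈ F := by
  classical
  obtain ⟨u, rfl⟩ := hF
  set S := argmaxSet V u with hS
  have hSne : S.Nonempty := argmaxSet_nonempty hV u
  set w1 : E2 →ₗ[ℝ] ℝ := LinearMap.proj 0 with hw1
  set w2 : E2 →ₗ[ℝ] ℝ := LinearMap.proj 1 with hw2
  obtain ⟨t1, ht1, hT1⟩ := perturb V hV u w1
  set T1 := argmaxSet S w1 with hT1def
  have hT1ne : T1.Nonempty := argmaxSet_nonempty hSne w1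
  obtain ⟨t2, ht2, hT2⟩ := perturb V hV (u + t1 • w1) w2
  rw [hT1] at hT2
  set T2 := argmaxSet T1 w2 with hT2def
  have hT2ne : T2.Nonempty := argmaxSet_nonempty hT1ne w2
  obtain ⟨v, hvT2⟩ := hT2ne
  have hsub21 : T2 ⊆ T1 := argmaxSet_subset T1 w2
  have hsub1S : T1 ⊆ S := argmaxSet_subset S w1
  have hT2sing : T2 = {v} := by
    apply Finset.eq_singleton_iff_unique_mem.2
    refine ⟨hvT2, fun x hx => ?_⟩
    have h1 : w1 x = w1 v := le_antisymm
      ((mem_argmaxSet.1 (hsub21 hvT2)).2 x (hsub1S (hsub21 hx)))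
      ((mem_argmaxSet.1 (hsub21 hx)).2 v (hsub1S (hsub21 hvT2)))
    have h2 : w2 x = w2 v := le_antisymm
      ((mem_argmaxSet.1 hvT2).2 x (hsub21 hx))
      ((mem_argmaxSet.1 hx).2 v (hsub21 hvT2))
    funext i
    fin_cases i
    · exact h1
    · exact h2
  refine ⟨v, argmaxSet_subset V u (hsub1S (hsub21 hvT2)), ⟨u + t1 • w1 + t2 • w2, ?_⟩, ?_⟩
  · rw [maxFace_convexHull V hV, hT2, hT2sing]
    simp
  · rw [maxFace_convexHull V hV u]
    exact subset_convexHull ℝ _ (hsub1S (hsub21 hvT2))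

/-- Structure of an edge of a 2-dimensional polytope: it is a segment whose endpoints
are vertices. -/
lemma edge_struct {V : Finset E2} (hV : V.Nonempty) {F : Set E2}
    (hF : IsEdgeOf (convexHull ℝ (V : Set E2)) F) :
    ∃ p q : E2, p ≠ q ∧ F = segment ℝ p q ∧
      IsVertexOf (convexHull ℝ (V : Set E2)) p ∧ IsVertexOf (convexHull ℝ (V : Set E2)) q := by
  classical
  obtain ⟨⟨u, rfl⟩, hdim⟩ := hF
  set C : Set E2 := convexHull ℝ (V : Set E2) with hC
  rw [maxFace_convexHull V hV u] at hdim ⊢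
  set S := argmaxSet V u with hS
  have hSne : S.Nonempty := argmaxSet_nonempty hV u
  obtain ⟨s₀, hs₀⟩ := hSne
  set F : Set E2 := convexHull ℝ (S : Set E2) with hF
  set D := (affineSpan ℝ F).direction with hD
  have hdim1 : Module.finrank ℝ D = 1 := hdim
  obtain ⟨ev, hev0, hevspan⟩ := finrank_eq_one_iff'.1 hdim1
  set e : E2 := (ev : E2) with he
  have he0 : e ≠ 0 := fun h => hev0 (Subtype.ext h)
  have hmemD : ∀ s ∈ S, (s : E2) - s₀ ∈ D := by
    intro s hs
    have h1 : (s : E2) ∈ affineSpan ℝ F := mem_affineSpan ℝ (subset_convexHull ℝ _ hs)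
    have h2 : (s₀ : E2) ∈ affineSpan ℝ F := mem_affineSpan ℝ (subset_convexHull ℝ _ hs₀)
    have := AffineSubspace.vsub_mem_direction h1 h2
    rwa [vsub_eq_sub] at this
  have hcoord : ∀ s ∈ S, ∃ c : ℝ, s = s₀ + c • e := by
    intro s hs
    obtain ⟨c, hc⟩ := hevspan ⟨s - s₀, hmemD s hs⟩
    refine ⟨c, ?_⟩
    have : c • e = s - s₀ := congrArg Subtype.val hc
    rw [this]; abel
  obtain ⟨i, hi⟩ := Function.ne_iff.1 he0
  have hei : e i ≠ 0 := by simpa using hi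
  set φ : E2 →ₗ[ℝ] ℝ := (e i)⁻¹ • LinearMap.proj i with hφ
  have hφe : ∀ (x : E2) (c : ℝ), φ (x + c • e) = φ x + c := by
    intro x c
    simp only [hφ, LinearMap.smul_apply, LinearMap.proj_apply, smul_eq_mul, Pi.add_apply,
      Pi.smul_apply]
    field_simp
  -- max end
  obtain ⟨t1, ht1, hmax1⟩ := perturb V hV u φ
  have hTqne : (argmaxSet S φ).Nonempty := argmaxSet_nonempty ⟨s₀, hs₀⟩ φ
  obtain ⟨q, hq⟩ := hTqne
  -- min end
  obtain ⟨t2, ht2, hmax2⟩ := perturb V hV u (-φ)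
  have hTpne : (argmaxSet S (-φ)).Nonempty := argmaxSet_nonempty ⟨s₀, hs₀⟩ (-φ)
  obtain ⟨p, hp⟩ := hTpne
  have hpS : p ∈ S := argmaxSet_subset _ _ hp
  have hqS : q ∈ S := argmaxSet_subset _ _ hq
  obtain ⟨cp, hcp⟩ := hcoord p hpS
  obtain ⟨cq, hcq⟩ := hcoord q hqS
  have hcval : ∀ {s : E2} {c : ℝ}, s = s₀ + c • e → φ s = φ s₀ + c := by
    intro s c hsc; rw [hsc, hφe]
  have hsandwich : ∀ s ∈ S, φ p ≤ φ s ∧ φ s ≤ φ q := by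
    intro s hs
    constructor
    · have := (mem_argmaxSet.1 hp).2 s hs
      simpa using this
    · exact (mem_argmaxSet.1 hq).2 s hs
  have hcpq : ∀ s ∈ S, ∀ c : ℝ, s = s₀ + c • e → cp ≤ c ∧ c ≤ cq := by
    intro s hs c hsc
    have h1 := (hsandwich s hs).1
    have h2 := (hsandwich s hs).2
    rw [hcval hsc, hcval hcp] at h1
    rw [hcval hsc, hcval hcq] at h2
    constructor <;> linarith
  -- singleton property of argmax sets
  have hsingleton : ∀ (ψ : E2 →ₗ[ℝ] ℝ) (x : E2), ((∀ (s : E2) (c : ℝ), s = s₀ + c • e →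
      ψ s = ψ s₀ + c) ∨ (∀ (s : E2) (c : ℝ), s = s₀ + c • e → ψ s = ψ s₀ - c)) →
      x ∈ argmaxSet S ψ → argmaxSet S ψ = {x} := by
    intro ψ x hψ hx
    apply Finset.eq_singleton_iff_unique_mem.2
    refine ⟨hx, fun y hy => ?_⟩
    obtain ⟨cx, hcx⟩ := hcoord x (argmaxSet_subset _ _ hx)
    obtain ⟨cy, hcy⟩ := hcoord y (argmaxSet_subset _ _ hy)
    have h1 : ψ x = ψ y := le_antisymm
      ((mem_argmaxSet.1 hy).2 x (argmaxSet_subset _ _ hx))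
      ((mem_argmaxSet.1 hx).2 y (argmaxSet_subset _ _ hy))
    have hcc : cx = cy := by
      rcases hψ with hall | hall <;>
        (have h := hall x cx hcx; have h' := hall y cy hcy; rw [h, h'] at h1; linarith)
    rw [hcy, hcx, hcc]
  have hq_sing : argmaxSet S φ = {q} :=
    hsingleton φ q (Or.inl (fun s c hsc => hcval hsc)) hq
  have hp_sing : argmaxSet S (-φ) = {p} := by
    refine hsingleton (-φ) p (Or.inr (fun s c hsc => ?_)) hp
    simp only [LinearMap.neg_apply, hcval hsc]; ring
  have hqvert : IsVertexOf C q := by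
    refine ⟨u + t1 • φ, ?_⟩
    rw [hC, maxFace_convexHull V hV, hmax1, ← hS, hq_sing]
    simp
  have hpvert : IsVertexOf C p := by
    refine ⟨u + t2 • (-φ), ?_⟩
    rw [hC, maxFace_convexHull V hV, hmax2, ← hS, hp_sing]
    simp
  have hpq : p ≠ q := by
    intro hpqeq
    have hall : ∀ s ∈ S, s = p := by
      intro s hs
      obtain ⟨c, hc⟩ := hcoord s hs
      have h1 := (hsandwich s hs).1
      have h2 := (hsandwich s hs).2
      rw [hpqeq] at h1
      have h3 : φ s = φ q := le_antisymm h2 h1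
      rw [hcval hc, hcval hcq] at h3
      have hccq : c = cq := by linarith
      rw [hc, hpqeq, hcq, hccq]
    have hSp : S = {p} := by
      apply Finset.eq_singleton_iff_unique_mem.2
      exact ⟨hpS, hall⟩
    rw [hF, hSp] at hdim
    simp only [Finset.coe_singleton, convexHull_singleton] at hdim
    rw [dimSet_singleton] at hdim
    exact absurd hdim (by norm_num)
  have hcplt : cp < cq := by
    rcases lt_or_eq_of_le (hcpq q hqS cq hcq).1 with h | h
    · exact h
    · exfalso; apply hpq; rw [hcp, hcq, ← h]
  have hne : cq - cp ≠ 0 := (by linarith : (0:ℝ) < cq - cp).ne'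
  refine ⟨p, q, hpq, ?_, hpvert, hqvert⟩
  apply Set.Subset.antisymm
  · apply convexHull_min ?_ (convex_segment p q)
    intro s hs
    rw [Finset.mem_coe] at hs
    obtain ⟨c, hc⟩ := hcoord s hs
    obtain ⟨h1, h2⟩ := hcpq s hs c hc
    refine ⟨(cq - c)/(cq - cp), (c - cp)/(cq - cp),
      div_nonneg (by linarith) (by linarith), div_nonneg (by linarith) (by linarith), ?_, ?_⟩
    · rw [← add_div, show cq - c + (c - cp) = cq - cp by ring]
      exact div_self hne
    · rw [hcp, hcq, hc]
      have key : ((cq - c)/(cq - cp)) • (s₀ + cp • e) + ((c - cp)/(cq - cp)) • (s₀ + cq • e)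
          = ((cq - c)/(cq - cp) + (c - cp)/(cq - cp)) • s₀ +
            ((cq - c)/(cq - cp) * cp + (c - cp)/(cq - cp) * cq) • e := by module
      rw [key, ← add_div, show cq - c + (c - cp) = cq - cp by ring, div_self hne, one_smul]
      congr 1
      congr 1
      field_simp
      ring
  · exact (convex_convexHull ℝ _).segment_subset (subset_convexHull ℝ _ hpS)
      (subset_convexHull ℝ _ hqS)

/-! ### Integer primitive vector lemmas -/

def castR (u : Fin 2 → ℤ) : E2 := fun i => (u i : ℝ)

lemma castR_neg (u : Fin 2 → ℤ) : castR (-u) = -castR u := by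
  funext i; simp [castR]

lemma prim_ne_zero {u : Fin 2 → ℤ} (h : IsPrimitiveVector u) : u ≠ 0 := by
  intro h0
  have := h 0 u (by rw [h0, zero_smul])
  simp at this

lemma castR_ne_zero {u : Fin 2 → ℤ} (h : u ≠ 0) : castR u ≠ 0 := by
  intro h0
  apply h
  funext i
  have : castR u i = 0 := by rw [h0]; rfl
  simpa [castR] using this

lemma prim_neg {u : Fin 2 → ℤ} (h : IsPrimitiveVector u) : IsPrimitiveVector (-u) := by
  intro k w hw
  apply h k (-w)
  rw [smul_neg, ← hw, neg_neg]

lemma prim_unique {u w : Fin 2 → ℤ} (hu : IsPrimitiveVector u) (hw : IsPrimitiveVector w)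
    {t : ℝ} (ht : 0 < t) (h : castR w = t • castR u) : w = u := by
  have hu0 : u ≠ 0 := prim_ne_zero hu
  obtain ⟨i, hi⟩ := Function.ne_iff.1 hu0
  have hui : u i ≠ 0 := by simpa using hi
  have hcoord : ∀ j, (w j : ℝ) = t * (u j : ℝ) := by
    intro j
    have := congrFun h j
    simpa [castR, Pi.smul_apply, smul_eq_mul] using this
  have hcross : ∀ j, u i * w j = w i * u j := by
    intro j
    have : ((u i : ℝ)) * (w j : ℝ) = (w i : ℝ) * (u j : ℝ) := by
      rw [hcoord j, hcoord i]; ring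
    exact_mod_cast this
  set g : ℕ := Int.gcd (w i) (u i) with hg
  have hgpos : 0 < g := Int.gcd_pos_of_ne_zero_right _ hui
  have hgz : (g : ℤ) ≠ 0 := by exact_mod_cast hgpos.ne'
  obtain ⟨m, hmg⟩ : (g : ℤ) ∣ w i := Int.gcd_dvd_left _ _
  obtain ⟨n, hng⟩ : (g : ℤ) ∣ u i := Int.gcd_dvd_right _ _
  have hm' : m = w i / (g : ℤ) := by rw [hmg, Int.mul_ediv_cancel_left _ hgz]
  have hn' : n = u i / (g : ℤ) := by rw [hng, Int.mul_ediv_cancel_left _ hgz]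
  have hco : Int.gcd m n = 1 := by
    rw [hm', hn']; exact Int.gcd_div_gcd_div_gcd hgpos
  have hcop : IsCoprime m n := Int.isCoprime_iff_gcd_eq_one.2 hco
  have hn0 : n ≠ 0 := by
    intro h0; apply hui; rw [hng, h0, mul_zero]
  have hkey : ∀ j, n * w j = m * u j := by
    intro j
    have h1 : (g : ℤ) * (n * w j) = g * (m * u j) := by
      have := hcross j
      rw [hng, hmg] at this
      linarith [this]
    exact mul_left_cancel₀ (by exact_mod_cast hgpos.ne') h1
  have hdvd_u : ∀ j, n ∣ u j := by
    intro j
    exact (hcop.symm).dvd_of_dvd_mul_left ⟨w j, (hkey j).symm⟩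
  have hdvd_w : ∀ j, m ∣ w j := by
    intro j
    exact hcop.dvd_of_dvd_mul_left ⟨u j, hkey j⟩
  have hun : IsUnit n := hu n (fun j => u j / n) (by
    funext j
    simp only [Pi.smul_apply, smul_eq_mul]
    exact (Int.mul_ediv_cancel' (hdvd_u j)).symm)
  have hum : IsUnit m := hw m (fun j => w j / m) (by
    funext j
    simp only [Pi.smul_apply, smul_eq_mul]
    exact (Int.mul_ediv_cancel' (hdvd_w j)).symm)
  have hn1 : n = 1 ∨ n = -1 := Int.isUnit_iff.1 hun
  have hm1 : m = 1 ∨ m = -1 := Int.isUnit_iff.1 hum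
  have hwnm : ∀ j, w j = (n * m) * u j := by
    intro j
    have := hkey j
    rcases hn1 with rfl | rfl <;> rcases hm1 with rfl | rfl <;> linarith
  have htnm : ((n * m : ℤ) : ℝ) = t := by
    have h1 : (w i : ℝ) = ((n * m : ℤ) : ℝ) * (u i : ℝ) := by exact_mod_cast congrArg Int.cast (hwnm i)
    rw [hcoord i] at h1
    have hui' : (u i : ℝ) ≠ 0 := Int.cast_ne_zero.2 hui
    exact (mul_right_cancel₀ hui' h1.symm)
  have hnm1 : n * m = 1 := by
    rcases hn1 with rfl | rfl <;> rcases hm1 with rfl | rfl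
    · norm_num
    · exfalso; norm_num at htnm; linarith
    · exfalso; norm_num at htnm; linarith
    · norm_num
  funext j
  rw [hwnm j, hnm1, one_mul]

/-- Determinant of a `ℤ`-basis of `ℤ²` is `±1`. -/
lemma basis_det (b : Module.Basis (Fin 2) ℤ (Fin 2 → ℤ)) :
    b 0 0 * b 1 1 - b 0 1 * b 1 0 = 1 ∨ b 0 0 * b 1 1 - b 0 1 * b 1 0 = -1 := by
  set eb := Pi.basisFun ℤ (Fin 2) with heb
  have h := Module.Basis.toMatrix_mul_toMatrix_flip eb b
  have hdet : (eb.toMatrix ⇑b).det * (b.toMatrix ⇑eb).det = 1 := by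
    rw [← Matrix.det_mul, h, Matrix.det_one]
  have hunit : IsUnit (eb.toMatrix ⇑b).det := ⟨⟨_, _, hdet, by rw [mul_comm]; exact hdet⟩, rfl⟩
  rw [Matrix.det_fin_two] at hunit
  have hent : ∀ i j : Fin 2, eb.toMatrix ⇑b i j = b j i := by
    intro i j
    rw [Module.Basis.toMatrix_apply, heb, Pi.basisFun_repr]
  rw [hent 0 0, hent 0 1, hent 1 1, hent 1 0] at hunit
  rcases Int.isUnit_iff.1 hunit with h1 | h1
  · left; linarith [mul_comm (b 1 0) (b 0 1)]
  · right; linarith [mul_comm (b 1 0) (b 0 1)]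

/-! ### 2×2 real determinant -/

def det2 (x y : E2) : ℝ := x 0 * y 1 - x 1 * y 0

lemma det2_castR (x y : Fin 2 → ℤ) :
    det2 (castR x) (castR y) = ((x 0 * y 1 - x 1 * y 0 : ℤ) : ℝ) := by
  simp [det2, castR]

lemma det2_neg_left (x y : E2) : det2 (-x) y = -det2 x y := by
  simp [det2]; ring

lemma det2_swap (x y : E2) : det2 x y = -det2 y x := by
  simp [det2]; ring

/-! ### The unit square -/

lemma dotL_apply (y x : E2) : dotL y x = y 0 * x 0 + y 1 * x 1 := by
  simp [dotL, Fin.sum_univ_two, smul_eq_mul]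

def V0 : Finset E2 := {![0,0], ![0,1], ![1,0], ![1,1]}

lemma mem_V0 {x : E2} : x ∈ V0 ↔ x = ![0,0] ∨ x = ![0,1] ∨ x = ![1,0] ∨ x = ![1,1] := by
  simp [V0]

lemma V0_nonempty : V0.Nonempty := ⟨![0,0], by simp [V0]⟩

lemma unitCube_convex : Convex ℝ (unitCube 2) := by
  have h : unitCube 2 = Set.pi Set.univ (fun _ : Fin 2 => Set.Icc (0:ℝ) 1) := by
    ext x; simp [unitCube, Set.pi]
  rw [h]
  exact convex_pi (fun i _ => convex_Icc 0 1)

lemma corner_mem_cube : ∀ v ∈ V0, v ∈ unitCube 2 := by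
  intro v hv
  rcases mem_V0.1 hv with rfl | rfl | rfl | rfl <;> intro i <;> fin_cases i <;>
    simp [unitCube] <;> norm_num

lemma unitCube_eq : unitCube 2 = convexHull ℝ (V0 : Set E2) := by
  apply Set.Subset.antisymm
  · intro x hx
    have h0 := hx 0
    have h1 := hx 1
    rw [Set.mem_Icc] at h0 h1
    have m00 : (![0,0] : E2) ∈ convexHull ℝ (V0 : Set E2) :=
      subset_convexHull ℝ _ (by simp [V0])
    have m01 : (![0,1] : E2) ∈ convexHull ℝ (V0 : Set E2) :=
      subset_convexHull ℝ _ (by simp [V0])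
    have m10 : (![1,0] : E2) ∈ convexHull ℝ (V0 : Set E2) :=
      subset_convexHull ℝ _ (by simp [V0])
    have m11 : (![1,1] : E2) ∈ convexHull ℝ (V0 : Set E2) :=
      subset_convexHull ℝ _ (by simp [V0])
    have hseg0 : (![0, x 1] : E2) ∈ convexHull ℝ (V0 : Set E2) := by
      have hcomb : (1 - x 1) • (![0,0] : E2) + (x 1) • (![0,1] : E2) = ![0, x 1] := by
        funext i; fin_cases i <;> simp
      rw [← hcomb]
      exact (convex_convexHull ℝ _) m00 m01 (by linarith) (by linarith) (by ring)
    have hseg1 : (![1, x 1] : E2) ∈ convexHull ℝ (V0 : Set E2) := by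
      have hcomb : (1 - x 1) • (![1,0] : E2) + (x 1) • (![1,1] : E2) = ![1, x 1] := by
        funext i; fin_cases i <;> simp
      rw [← hcomb]
      exact (convex_convexHull ℝ _) m10 m11 (by linarith) (by linarith) (by ring)
    have hcomb2 : (1 - x 0) • (![0, x 1] : E2) + (x 0) • (![1, x 1] : E2) = x := by
      funext i; fin_cases i <;> simp <;> ring
    rw [← hcomb2]
    exact (convex_convexHull ℝ _) hseg0 hseg1 (by linarith) (by linarith) (by ring)
  · exact convexHull_min corner_mem_cube unitCube_convex

lemma cube_corner_face (σ : E2) (hσ : ∀ i, σ i = 1 ∨ σ i = -1) :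
    ({fun i => if σ i = 1 then (1:ℝ) else 0} : Set E2) = maxFace (unitCube 2) (dotL σ) := by
  set c : E2 := fun i => if σ i = 1 then (1:ℝ) else 0 with hcdef
  have hc : c ∈ unitCube 2 := by
    intro i; rw [hcdef]; dsimp only; split <;> norm_num
  have hle : ∀ x ∈ unitCube 2, ∀ i, σ i * x i ≤ σ i * c i := by
    intro x hx i
    have hci : c i = if σ i = 1 then 1 else 0 := rfl
    rcases hσ i with h | h
    · have hc1 : c i = 1 := by rw [hci, h]; simp
      rw [h, hc1]
      linarith [(hx i).2]
    · have hc0 : c i = 0 := by rw [hci, h]; norm_num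
      rw [h, hc0]
      linarith [(hx i).1]
  ext x
  simp only [Set.mem_singleton_iff, maxFace, Set.mem_setOf_eq]
  constructor
  · rintro rfl
    refine ⟨hc, fun y hy => ?_⟩
    rw [dotL_apply, dotL_apply]
    linarith [hle y hy 0, hle y hy 1]
  · rintro ⟨hx, hmax⟩
    have h0 := hle x hx 0
    have h1 := hle x hx 1
    have hge := hmax _ hc
    rw [dotL_apply, dotL_apply] at hge
    have e0 : σ 0 * x 0 = σ 0 * c 0 := by linarith
    have e1 : σ 1 * x 1 = σ 1 * c 1 := by linarith
    have hσ0 : σ 0 ≠ 0 := by rcases hσ 0 with h | h <;> rw [h] <;> norm_num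
    have hσ1 : σ 1 ≠ 0 := by rcases hσ 1 with h | h <;> rw [h] <;> norm_num
    funext i
    fin_cases i
    · exact mul_left_cancel₀ hσ0 e0
    · exact mul_left_cancel₀ hσ1 e1

lemma corner_vertex : ∀ v ∈ V0, IsVertexOf (unitCube 2) v := by
  intro v hv
  rcases mem_V0.1 hv with rfl | rfl | rfl | rfl
  · refine ⟨dotL ![-1,-1], ?_⟩
    have h := cube_corner_face ![-1,-1] (by intro i; fin_cases i <;> norm_num)
    rw [← h]
    congr 1
    funext i; fin_cases i <;> norm_num
  · refine ⟨dotL ![-1,1], ?_⟩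
    have h := cube_corner_face ![-1,1] (by intro i; fin_cases i <;> norm_num)
    rw [← h]
    congr 1
    funext i; fin_cases i <;> norm_num
  · refine ⟨dotL ![1,-1], ?_⟩
    have h := cube_corner_face ![1,-1] (by intro i; fin_cases i <;> norm_num)
    rw [← h]
    congr 1
    funext i; fin_cases i <;> norm_num
  · refine ⟨dotL ![1,1], ?_⟩
    have h := cube_corner_face ![1,1] (by intro i; fin_cases i <;> norm_num)
    rw [← h]
    congr 1
    funext i; fin_cases i <;> norm_num

/-! ### Minimal faces -/

lemma isMin_singleton_face {V : Finset E2} (hV : V.Nonempty) {P : Set E2}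
    (hP : P = convexHull ℝ (V : Set E2)) {v : E2}
    (x : {F : Set E2 // IsFaceOf P F}) (hx : x.1 = {v}) : IsMin x := by
  intro y hy
  have hy1 : y.1 ⊆ ({v} : Set E2) := by rw [← hx]; exact hy
  have hyne : y.1.Nonempty := by
    obtain ⟨u, hu⟩ := y.2
    rw [hu, hP, maxFace_convexHull V hV]
    obtain ⟨s, hs⟩ := argmaxSet_nonempty hV u
    exact ⟨s, subset_convexHull ℝ _ hs⟩
  have hy2 : y.1 = {v} := by
    rcases Set.subset_singleton_iff_eq.1 hy1 with h | h
    · exfalso; rw [h] at hyne; exact Set.not_nonempty_empty hyne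
    · exact h
  have : x = y := Subtype.ext (by rw [hx, hy2])
  exact le_of_eq this

lemma isMin_structure {V : Finset E2} (hV : V.Nonempty) {P : Set E2}
    (hP : P = convexHull ℝ (V : Set E2))
    (x : {F : Set E2 // IsFaceOf P F}) (hmin : IsMin x) :
    ∃ v, v ∈ V ∧ IsVertexOf P v ∧ x.1 = {v} := by
  subst hP
  obtain ⟨v, hvV, hvvert, hvmem⟩ := face_has_vertex hV x.2
  refine ⟨v, hvV, hvvert, ?_⟩
  have hyle : (⟨{v}, hvvert⟩ : {F : Set E2 // IsFaceOf (convexHull ℝ (V : Set E2)) F}) ≤ x := by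
    show ({v} : Set E2) ⊆ x.1
    exact Set.singleton_subset_iff.2 hvmem
  have hxle := hmin hyle
  have hxsub : x.1 ⊆ {v} := hxle
  exact Set.Subset.antisymm hxsub (Set.singleton_subset_iff.2 hvmem)

/-- A smooth lattice quadrilateral has exactly four vertices. -/
lemma exactly_four_vertices {V : Finset E2} (hV : V.Nonempty) {C : Set E2}
    (hCe : C = convexHull ℝ (V : Set E2))
    (φ : {F : Set E2 // IsFaceOf (unitCube 2) F} ≃o {F : Set E2 // IsFaceOf C F}) :
    ∃ b : Fin 4 → E2, Function.Injective b ∧ (∀ k, IsVertexOf C (b k)) ∧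
      ∀ v, IsVertexOf C v → ∃ k, v = b k := by
  classical
  set K : Fin 4 → E2 := ![![0,0], ![0,1], ![1,0], ![1,1]] with hK
  have hKV0 : ∀ k, K k ∈ V0 := by intro k; fin_cases k <;> simp [hK, V0]
  have hKinj : Function.Injective K := by
    intro a b hab
    have h0 := congrFun hab 0
    have h1 := congrFun hab 1
    fin_cases a <;> fin_cases b <;> first
      | rfl
      | (exfalso; simp [hK, Matrix.vecHead, Matrix.vecTail] at h0 h1)
  set x : Fin 4 → {F : Set E2 // IsFaceOf (unitCube 2) F} :=
    fun k => ⟨{K k}, corner_vertex _ (hKV0 k)⟩ with hx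
  have hxmin : ∀ k, IsMin (x k) := fun k =>
    isMin_singleton_face V0_nonempty unitCube_eq (x k) rfl
  have hymin : ∀ k, IsMin (φ (x k)) := fun k => (OrderIso.isMin_apply φ).2 (hxmin k)
  have hstr := fun k => isMin_structure hV hCe (φ (x k)) (hymin k)
  choose w hwV hwvert hweq using hstr
  refine ⟨w, ?_, hwvert, ?_⟩
  · intro a b hab
    have h1 : φ (x a) = φ (x b) := Subtype.ext (by rw [hweq a, hweq b, hab])
    have h2 : x a = x b := φ.injective h1
    have h3 : ({K a} : Set E2) = {K b} := congrArg Subtype.val h2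
    exact hKinj (Set.singleton_eq_singleton_iff.1 h3)
  · intro v hv
    set xv : {F : Set E2 // IsFaceOf C F} := ⟨{v}, hv⟩ with hxv
    have hxvmin : IsMin xv := isMin_singleton_face hV hCe xv rfl
    have hsymmin : IsMin (φ.symm xv) := (OrderIso.isMin_apply φ.symm).2 hxvmin
    obtain ⟨c, hcV0, hcvert, hceq⟩ :=
      isMin_structure V0_nonempty unitCube_eq (φ.symm xv) hsymmin
    have hck : ∃ k, c = K k := by
      rcases mem_V0.1 hcV0 with h | h | h | h
      · exact ⟨0, h.trans (by simp [hK])⟩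
      · exact ⟨1, h.trans (by simp [hK])⟩
      · exact ⟨2, h.trans (by simp [hK])⟩
      · exact ⟨3, h.trans (by simp [hK])⟩
    obtain ⟨k, rfl⟩ := hck
    have h4 : φ.symm xv = x k := Subtype.ext hceq
    have h5 : xv = φ (x k) := by rw [← h4, OrderIso.apply_symm_apply]
    have h6 : ({v} : Set E2) = {w k} := by
      have := congrArg Subtype.val h5
      rw [hweq k] at this
      exact this
    exact ⟨k, Set.singleton_eq_singleton_iff.1 h6⟩

/-! ### Edges at a vertex -/

lemma edges_at {C : Set E2} (hsimp : IsSimplePolytope C) {v : E2} (hv : IsVertexOf C v) :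
    ∃ Fa Fb : Set E2, Fa ≠ Fb ∧ IsEdgeOf C Fa ∧ IsEdgeOf C Fb ∧ v ∈ Fa ∧ v ∈ Fb ∧
      ∀ H, IsEdgeOf C H → v ∈ H → H = Fa ∨ H = Fb := by
  have h := hsimp v hv
  rw [Set.ncard_eq_two] at h
  obtain ⟨Fa, Fb, hne, hset⟩ := h
  have hmem : ∀ H : Set E2, (IsEdgeOf C H ∧ v ∈ H) ↔ (H = Fa ∨ H = Fb) := by
    intro H
    constructor
    · intro hH
      have : H ∈ ({F : Set E2 | IsEdgeOf C F ∧ v ∈ F}) := hH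
      rw [hset] at this
      simpa using this
    · intro hH
      have : H ∈ ({Fa, Fb} : Set (Set E2)) := by simpa using hH
      rw [← hset] at this
      exact this
  have ha := (hmem Fa).2 (Or.inl rfl)
  have hb := (hmem Fb).2 (Or.inr rfl)
  exact ⟨Fa, Fb, hne, ha.1, hb.1, ha.2, hb.2, fun H h1 h2 => (hmem H).1 ⟨h1, h2⟩⟩

lemma edges_at_pair {C : Set E2} (hsimp : IsSimplePolytope C) {v : E2} (hv : IsVertexOf C v)
    {Fa : Set E2} (hFa : IsEdgeOf C Fa) (hvFa : v ∈ Fa) :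
    ∃ Fb, IsEdgeOf C Fb ∧ v ∈ Fb ∧ Fb ≠ Fa ∧
      ∀ H, IsEdgeOf C H → v ∈ H → H = Fa ∨ H = Fb := by
  obtain ⟨G1, G2, h12, he1, he2, hv1, hv2, huniq⟩ := edges_at hsimp hv
  rcases huniq Fa hFa hvFa with rfl | rfl
  · exact ⟨G2, he2, hv2, h12.symm, fun H h1 h2 => huniq H h1 h2⟩
  · exact ⟨G1, he1, hv1, h12, fun H h1 h2 => (huniq H h1 h2).symm⟩

lemma edges_at_pair₂ {C : Set E2} (hsimp : IsSimplePolytope C) {v : E2} (hv : IsVertexOf C v)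
    {Fa Fb : Set E2} (hFa : IsEdgeOf C Fa) (hvFa : v ∈ Fa)
    (hFb : IsEdgeOf C Fb) (hvFb : v ∈ Fb) (hne : Fa ≠ Fb) :
    ∀ H, IsEdgeOf C H → v ∈ H → H = Fa ∨ H = Fb := by
  obtain ⟨G, hGe, hGv, hGne, huniq⟩ := edges_at_pair hsimp hv hFa hvFa
  rcases huniq Fb hFb hvFb with h | h
  · exact absurd h.symm hne
  · intro H h1 h2
    rcases huniq H h1 h2 with h' | h'
    · exact Or.inl h'
    · exact Or.inr (h'.trans h.symm)

lemma edge_endpoints {V : Finset E2} (hV : V.Nonempty) {F : Set E2}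
    (hF : IsEdgeOf (convexHull ℝ (V : Set E2)) F) {v : E2}
    (hvF : v ∈ F) (hv : IsVertexOf (convexHull ℝ (V : Set E2)) v) :
    ∃ w, IsVertexOf (convexHull ℝ (V : Set E2)) w ∧ w ≠ v ∧ F = segment ℝ v w ∧
      ∀ z, IsVertexOf (convexHull ℝ (V : Set E2)) z → z ∈ F → z = v ∨ z = w := by
  obtain ⟨p, q, hpq, hFseg, hpv, hqv⟩ := edge_struct hV hF
  have hmem : ∀ z, IsVertexOf (convexHull ℝ (V : Set E2)) z → z ∈ F → z = p ∨ z = q := by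
    intro z hz hzF
    exact vertex_mem_segment hz (vertex_mem hpv) (vertex_mem hqv) (hFseg ▸ hzF)
  rcases hmem v hv hvF with rfl | rfl
  · exact ⟨q, hqv, hpq.symm, hFseg, hmem⟩
  · refine ⟨p, hpv, hpq, by rw [hFseg, segment_symm], fun z hz hzF => (hmem z hz hzF).symm⟩

lemma edge_sep {C F : Set E2} {u : E2 →ₗ[ℝ] ℝ} (hFm : F = maxFace C u)
    {p q z : E2} (hFseg : F = segment ℝ p q) (hz : z ∈ C) (hzv : IsVertexOf C z)
    (hzp : z ≠ p) (hzq : z ≠ q) (hpC : p ∈ C) (hqC : q ∈ C) (hpF : p ∈ F) :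
    u z < u p := by
  have hpm : p ∈ maxFace C u := hFm ▸ hpF
  have hle : u z ≤ u p := hpm.2 z hz
  rcases lt_or_eq_of_le hle with h | h
  · exact h
  · exfalso
    have hzm : z ∈ maxFace C u := ⟨hz, fun y hy => h ▸ hpm.2 y hy⟩
    have hzseg : z ∈ segment ℝ p q := by rw [← hFseg, hFm]; exact hzm
    rcases vertex_mem_segment hzv hpC hqC hzseg with h' | h'
    exacts [hzp h', hzq h']

/-! ### Primitive directions at a vertex of a smooth polytope -/

lemma opp_dir {x y : Fin 2 → ℤ} (hx : IsPrimitiveVector x) (hy : IsPrimitiveVector y)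
    {v w : E2} {t s : ℝ} (ht : 0 < t) (hs : 0 < s)
    (h1 : w - v = t • castR x) (h2 : v - w = s • castR y) : y = -x := by
  have h3 : castR y = (t/s) • castR (-x) := by
    funext j
    have e1 : w j - v j = t * (x j : ℝ) := by
      have := congrFun h1 j
      simpa [castR, Pi.sub_apply, smul_eq_mul] using this
    have e2 : v j - w j = s * (y j : ℝ) := by
      have := congrFun h2 j
      simpa [castR, Pi.sub_apply, smul_eq_mul] using this
    show (y j : ℝ) = (t/s) * ((-x) j : ℝ)
    have hxj : ((-x) j : ℝ) = -(x j : ℝ) := by push_cast; simp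
    rw [hxj]
    field_simp
    nlinarith [e1, e2]
  exact prim_unique (prim_neg hx) hy (div_pos ht hs) h3

lemma smooth_dirs {C : Set E2} {v w w' : E2}
    (hsm : ∃ b : Module.Basis (Fin 2) ℤ (Fin 2 → ℤ), ∀ i, IsPrimitiveEdgeDirectionAt C v (b i))
    (hEdges : ∀ H, IsEdgeOf C H → v ∈ H → H = segment ℝ v w ∨ H = segment ℝ v w')
    (hvw : v ≠ w) (hvw' : v ≠ w') (hww : segment ℝ v w ≠ segment ℝ v w') :
    ∃ x y : Fin 2 → ℤ, IsPrimitiveVector x ∧ IsPrimitiveVector y ∧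
      (∃ t : ℝ, 0 < t ∧ w - v = t • castR x) ∧ (∃ t : ℝ, 0 < t ∧ w' - v = t • castR y) ∧
      (x 0 * y 1 - x 1 * y 0 = 1 ∨ x 0 * y 1 - x 1 * y 0 = -1) := by
  obtain ⟨b, hb⟩ := hsm
  have hprim : ∀ i, IsPrimitiveVector (b i) := fun i => (hb i).1
  have hpoint : ∀ i : Fin 2, (∃ t : ℝ, 0 < t ∧ w - v = t • castR (b i)) ∨
      (∃ t : ℝ, 0 < t ∧ w' - v = t • castR (b i)) := by
    intro i
    obtain ⟨hp, F, hFedge, hvF, ε, hε, hmem⟩ := hb i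
    have key : ∀ ww : E2, (v + ε • castR (b i)) ∈ segment ℝ v ww →
        ∃ t : ℝ, 0 < t ∧ ww - v = t • castR (b i) := by
      intro ww hm
      obtain ⟨a, c, ha, hc, hac, heq⟩ := hm
      have ha' : a = 1 - c := by linarith
      have hc' : c • (ww - v) = ε • castR (b i) := by
        have h5 : v + c • (ww - v) = v + ε • castR (b i) := by
          rw [← heq, ha']; module
        exact add_left_cancel h5
      have hc0 : c ≠ 0 := by
        intro h0
        rw [h0, zero_smul] at hc'
        have hz : castR (b i) = 0 := by
          rcases smul_eq_zero.1 hc'.symm with h | h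
          · exact absurd h (ne_of_gt hε)
          · exact h
        exact castR_ne_zero (prim_ne_zero hp) hz
      have hcpos : 0 < c := lt_of_le_of_ne hc (Ne.symm hc0)
      refine ⟨ε / c, div_pos hε hcpos, ?_⟩
      have h6 : (ε / c) • castR (b i) = c⁻¹ • (ε • castR (b i)) := by
        rw [smul_smul]
        congr 1
        field_simp
      rw [h6, ← hc', smul_smul, inv_mul_cancel₀ hc0, one_smul]
    rcases hEdges F hFedge hvF with hFw | hFw'
    · exact Or.inl (key w (hFw ▸ hmem))
    · exact Or.inr (key w' (hFw' ▸ hmem))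
  have hb01 : b 0 ≠ b 1 := by
    intro h
    have := b.injective h
    exact absurd this (by decide)
  have hsame : ∀ i j : Fin 2, i ≠ j →
      ∀ ww : E2, (∃ t : ℝ, 0 < t ∧ ww - v = t • castR (b i)) →
      (∃ t : ℝ, 0 < t ∧ ww - v = t • castR (b j)) → False := by
    intro i j hij ww ⟨t0, ht0, h0⟩ ⟨t1, ht1, h1⟩
    have : castR (b i) = (t1/t0) • castR (b j) := by
      have h2 : t0 • castR (b i) = t1 • castR (b j) := by rw [← h0, ← h1]
      have h3 : castR (b i) = t0⁻¹ • (t0 • castR (b i)) := by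
        rw [smul_smul, inv_mul_cancel₀ (ne_of_gt ht0), one_smul]
      rw [h3, h2, smul_smul]
      congr 1
      field_simp
    have heq := prim_unique (hprim j) (hprim i) (div_pos ht1 ht0) this
    exact absurd (b.injective heq) hij
  rcases hpoint 0 with h0 | h0 <;> rcases hpoint 1 with h1 | h1
  · exact (hsame 0 1 (by decide) w h0 h1).elim
  · refine ⟨b 0, b 1, hprim 0, hprim 1, h0, h1, ?_⟩
    have := basis_det b
    exact this
  · refine ⟨b 1, b 0, hprim 1, hprim 0, h1, h0, ?_⟩
    rcases basis_det b with h | h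
    · right; linarith
    · left; linarith
  · exact (hsame 0 1 (by decide) w' h0 h1).elim

lemma span_pos_smul {x : E2} {t : ℝ} (ht : t ≠ 0) : (ℝ ∙ (t • x)) = ℝ ∙ x :=
  Submodule.span_singleton_smul_eq (IsUnit.mk0 t ht) x

end Aux

set_option maxHeartbeats 4000000 in
/-- Every smooth 2-dimensional combinatorial cube (smooth lattice
quadrilateral) has two distinct parallel edges. -/
theorem smooth_quadrilateral_has_two_parallel_edges
    (C : Set (Fin 2 → ℝ))
    (hC : IsCombinatorialCube 2 C) (hsmooth : IsSmoothPolytope C) :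
    ∃ F G : Set (Fin 2 → ℝ),
      IsEdgeOf C F ∧ IsEdgeOf C G ∧ F ≠ G ∧ AreParallel F G := by
  classical
  open Aux in
  obtain ⟨⟨V, -, hCe⟩, hdim2, ⟨φ⟩⟩ := hC
  subst hCe
  have hsimple : IsSimplePolytope (convexHull ℝ (V : Set E2)) := hsmooth.2.1
  have hsm := hsmooth.2.2
  have hVne : V.Nonempty := by
    rcases Finset.eq_empty_or_nonempty V with h | h
    · exfalso
      rw [h] at hdim2
      simp only [Finset.coe_empty, convexHull_empty] at hdim2
      unfold dimSet at hdim2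
      rw [AffineSubspace.span_empty, AffineSubspace.direction_bot] at hdim2
      simp at hdim2
    · exact h
  -- the four vertices
  obtain ⟨bV, hbinj, hbvert, hbcomplete⟩ := exactly_four_vertices hVne rfl φ
  have hmem4 : ∀ a b c d j : Fin 4, a ≠ b → a ≠ c → a ≠ d → b ≠ c → b ≠ d → c ≠ d →
      j = a ∨ j = b ∨ j = c ∨ j = d := by decide
  have hfourth : ∀ a b c : Fin 4, a ≠ b → a ≠ c → b ≠ c →
      ∃ k : Fin 4, k ≠ a ∧ k ≠ b ∧ k ≠ c := by decide
  set v1 : E2 := bV 0 with hv1def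
  have hv1 : IsVertexOf (convexHull ℝ (V : Set E2)) v1 := hbvert 0
  obtain ⟨Fa, Fb, hFaFb, hFae, hFbe, hv1Fa, hv1Fb, huniq1⟩ := edges_at hsimple hv1
  obtain ⟨v2, hv2, hv21, hFaseg, hFacl⟩ := edge_endpoints hVne hFae hv1Fa hv1
  obtain ⟨v4, hv4, hv41, hFbseg, hFbcl⟩ := edge_endpoints hVne hFbe hv1Fb hv1
  have hv24 : v2 ≠ v4 := by
    intro h
    apply hFaFb
    rw [hFaseg, hFbseg, h]
  have hv2Fa : v2 ∈ Fa := by rw [hFaseg]; exact right_mem_segment ℝ _ _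
  have hv4Fb : v4 ∈ Fb := by rw [hFbseg]; exact right_mem_segment ℝ _ _
  obtain ⟨Eb, hEbe, hv2Eb, hEbFa, huniq2'⟩ := edges_at_pair hsimple hv2 hFae hv2Fa
  obtain ⟨v3, hv3, hv32, hEbseg, hEbcl⟩ := edge_endpoints hVne hEbe hv2Eb hv2
  have hv31 : v3 ≠ v1 := by
    intro h
    apply hEbFa
    rw [hEbseg, hFaseg, h, segment_symm]
  have hv3Eb : v3 ∈ Eb := by rw [hEbseg]; exact right_mem_segment ℝ _ _
  have huniq2 := edges_at_pair₂ hsimple hv2 hFae hv2Fa hEbe hv2Eb (Ne.symm hEbFa)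
  -- v3 ≠ v4
  obtain ⟨k2, hk2⟩ := hbcomplete v2 hv2
  obtain ⟨k4, hk4⟩ := hbcomplete v4 hv4
  have h0k2 : (0 : Fin 4) ≠ k2 := by
    intro h; exact hv21 (by rw [hk2, ← h, ← hv1def])
  have h0k4 : (0 : Fin 4) ≠ k4 := by
    intro h; exact hv41 (by rw [hk4, ← h, ← hv1def])
  have hk24 : k2 ≠ k4 := by
    intro h; exact hv24 (by rw [hk2, hk4, h])
  have hv34 : v3 ≠ v4 := by
    intro h34
    obtain ⟨k', hk'0, hk'2, hk'4⟩ := hfourth 0 k2 k4 h0k2 h0k4 hk24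
    set v' : E2 := bV k' with hv'def
    have hv'vert : IsVertexOf (convexHull ℝ (V : Set E2)) v' := hbvert k'
    have hv'1 : v' ≠ v1 := by
      intro h; exact hk'0 (hbinj (by rw [← hv'def, ← hv1def, h]))
    have hv'2 : v' ≠ v2 := by
      intro h; exact hk'2 (hbinj (by rw [← hv'def, ← hk2, h]))
    have hv'4 : v' ≠ v4 := by
      intro h; exact hk'4 (hbinj (by rw [← hv'def, ← hk4, h]))
    obtain ⟨Ga, Gb, _, hGae, _, hv'Ga, _, _⟩ := edges_at hsimple hv'vert
    obtain ⟨y, hyv, hyne, hGaseg, hGacl⟩ := edge_endpoints hVne hGae hv'Ga hv'vert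
    obtain ⟨j, hj⟩ := hbcomplete y hyv
    have hjk' : j ≠ k' := by
      intro h; exact hyne (by rw [hj, h, ← hv'def])
    have hy_cases : y = v1 ∨ y = v2 ∨ y = v4 := by
      rcases hmem4 0 k2 k4 k' j h0k2 h0k4 hk'0.symm hk24 hk'2.symm hk'4.symm with h | h | h | h
      · exact Or.inl (by rw [hj, h, ← hv1def])
      · exact Or.inr (Or.inl (by rw [hj, h, ← hk2]))
      · exact Or.inr (Or.inr (by rw [hj, h, ← hk4]))
      · exact absurd h hjk'
    rcases hy_cases with hy1 | hy2 | hy4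
    · have hv1Ga : v1 ∈ Ga := by
        rw [hGaseg, hy1]; exact right_mem_segment ℝ _ _
      rcases huniq1 Ga hGae hv1Ga with h | h
      · rcases hFacl v' hv'vert (h ▸ hv'Ga) with h' | h'
        exacts [hv'1 h', hv'2 h']
      · rcases hFbcl v' hv'vert (h ▸ hv'Ga) with h' | h'
        exacts [hv'1 h', hv'4 h']
    · have hv2Ga : v2 ∈ Ga := by
        rw [hGaseg, hy2]; exact right_mem_segment ℝ _ _
      rcases huniq2 Ga hGae hv2Ga with h | h
      · rcases hFacl v' hv'vert (h ▸ hv'Ga) with h' | h'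
        exacts [hv'1 h', hv'2 h']
      · rcases hEbcl v' hv'vert (h ▸ hv'Ga) with h' | h'
        · exact hv'2 h'
        · exact hv'4 (h'.trans h34)
    · have hv4Eb : v4 ∈ Eb := by rw [← h34]; exact hv3Eb
      have hEbFb : Eb ≠ Fb := by
        intro h
        rcases hFbcl v2 hv2 (h ▸ hv2Eb) with h' | h'
        exacts [hv21 h', hv24 h']
      have hv4Ga : v4 ∈ Ga := by
        rw [hGaseg, hy4]; exact right_mem_segment ℝ _ _
      rcases edges_at_pair₂ hsimple hv4 hFbe hv4Fb hEbe hv4Eb (Ne.symm hEbFb)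
          Ga hGae hv4Ga with h | h
      · rcases hFbcl v' hv'vert (h ▸ hv'Ga) with h' | h'
        exacts [hv'1 h', hv'4 h']
      · rcases hEbcl v' hv'vert (h ▸ hv'Ga) with h' | h'
        · exact hv'2 h'
        · exact hv'4 (h'.trans h34)
  -- third edge at v3
  obtain ⟨Ec, hEce, hv3Ec, hEcEb, huniq3'⟩ := edges_at_pair hsimple hv3 hEbe hv3Eb
  obtain ⟨y, hyv, hyne3, hEcseg, hEccl⟩ := edge_endpoints hVne hEce hv3Ec hv3
  obtain ⟨k3, hk3⟩ := hbcomplete v3 hv3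
  have h0k3 : (0 : Fin 4) ≠ k3 := by
    intro h; exact hv31 (by rw [hk3, ← h, ← hv1def])
  have hk23 : k2 ≠ k3 := by
    intro h; exact hv32 (by rw [hk3, ← h, ← hk2])
  have hk34 : k3 ≠ k4 := by
    intro h; exact hv34 (by rw [hk3, hk4, h])
  have hyv4 : y = v4 := by
    obtain ⟨j, hj⟩ := hbcomplete y hyv
    have hy_cases : y = v1 ∨ y = v2 ∨ y = v3 ∨ y = v4 := by
      rcases hmem4 0 k2 k3 k4 j h0k2 h0k3 h0k4 hk23 hk24 hk34 with h | h | h | h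
      · exact Or.inl (by rw [hj, h, ← hv1def])
      · exact Or.inr (Or.inl (by rw [hj, h, ← hk2]))
      · exact Or.inr (Or.inr (Or.inl (by rw [hj, h, ← hk3])))
      · exact Or.inr (Or.inr (Or.inr (by rw [hj, h, ← hk4])))
    have hy1' : y ≠ v1 := by
      intro hy1
      have hv1Ec : v1 ∈ Ec := by rw [hEcseg, hy1]; exact right_mem_segment ℝ _ _
      rcases huniq1 Ec hEce hv1Ec with h | h
      · rcases hFacl v3 hv3 (h ▸ hv3Ec) with h' | h'
        exacts [hv31 h', hv32 h']
      · rcases hFbcl v3 hv3 (h ▸ hv3Ec) with h' | h'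
        exacts [hv31 h', hv34 h']
    have hy2' : y ≠ v2 := by
      intro hy2
      have hv2Ec : v2 ∈ Ec := by rw [hEcseg, hy2]; exact right_mem_segment ℝ _ _
      rcases huniq2 Ec hEce hv2Ec with h | h
      · rcases hFacl v3 hv3 (h ▸ hv3Ec) with h' | h'
        exacts [hv31 h', hv32 h']
      · exact hEcEb h
    rcases hy_cases with h | h | h | h
    exacts [absurd h hy1', absurd h hy2', absurd h hyne3, h]
  rw [hyv4] at hEcseg hEccl
  have hv4Ec : v4 ∈ Ec := by rw [hEcseg]; exact right_mem_segment ℝ _ _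
  have hEcFb : Ec ≠ Fb := by
    intro h
    rcases hFbcl v3 hv3 (h ▸ hv3Ec) with h' | h'
    exacts [hv31 h', hv34 h']
  have huniq4 := edges_at_pair₂ hsimple hv4 hEce hv4Ec hFbe hv4Fb hEcFb
  have huniq3 := edges_at_pair₂ hsimple hv3 hEbe hv3Eb hEce hv3Ec (Ne.symm hEcEb)
  -- primitive directions
  obtain ⟨p, s1, hp, hs1, ⟨l1, hl1, hl1e⟩, ⟨m1, hm1, hm1e⟩, hzps1⟩ :=
    smooth_dirs (hsm v1 hv1)
      (w := v2) (w' := v4)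
      (by
        intro H hHe hHv
        rcases huniq1 H hHe hHv with h | h
        · exact Or.inl (h.trans hFaseg)
        · exact Or.inr (h.trans hFbseg))
      (Ne.symm hv21) (Ne.symm hv41)
      (by
        intro h
        apply hFaFb
        rw [hFaseg, hFbseg, h])
  obtain ⟨q, y21, hq, hy21, ⟨l2, hl2, hl2e⟩, ⟨m2, hm2, hm2e⟩, hzqy⟩ :=
    smooth_dirs (hsm v2 hv2)
      (w := v3) (w' := v1)
      (by
        intro H hHe hHv
        rcases huniq2 H hHe hHv with h | h
        · exact Or.inr (by rw [h, hFaseg, segment_symm])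
        · exact Or.inl (h.trans hEbseg))
      (Ne.symm hv32) hv21
      (by
        intro h
        apply hEbFa
        rw [hEbseg, hFaseg, h, segment_symm])
  obtain ⟨r, y32, hr, hy32, ⟨l3, hl3, hl3e⟩, ⟨m3, hm3, hm3e⟩, hzry⟩ :=
    smooth_dirs (hsm v3 hv3)
      (w := v4) (w' := v2)
      (by
        intro H hHe hHv
        rcases huniq3 H hHe hHv with h | h
        · exact Or.inr (by rw [h, hEbseg, segment_symm])
        · exact Or.inl (h.trans hEcseg))
      hv34 hv32
      (by
        intro h
        apply hEcEb
        rw [hEcseg, hEbseg, h, segment_symm])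
  obtain ⟨s, y43, hs, hy43, ⟨l4, hl4, hl4e⟩, ⟨m4, hm4, hm4e⟩, hzsy⟩ :=
    smooth_dirs (hsm v4 hv4)
      (w := v1) (w' := v3)
      (by
        intro H hHe hHv
        rcases huniq4 H hHe hHv with h | h
        · exact Or.inr (by rw [h, hEcseg, segment_symm])
        · exact Or.inl (by rw [h, hFbseg, segment_symm]))
      hv41 (Ne.symm hv34)
      (by
        intro h
        apply hEcFb
        rw [hEcseg, hFbseg, segment_symm ℝ v3 v4, ← h, segment_symm])
  -- opposite directions
  have hy21p : y21 = -p := opp_dir hp hy21 hl1 hm2 hl1e hm2e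
  have hy32q : y32 = -q := opp_dir hq hy32 hl2 hm3 hl2e hm3e
  have hy43r : y43 = -r := opp_dir hr hy43 hl3 hm4 hl3e hm4e
  have hss1 : s = -s1 := opp_dir hs1 hs hm1 hl4 hm1e hl4e
  have hs1s : s1 = -s := by rw [hss1, neg_neg]
  -- integer determinant conditions
  have hzpq : p 0 * q 1 - p 1 * q 0 = 1 ∨ p 0 * q 1 - p 1 * q 0 = -1 := by
    rw [hy21p] at hzqy
    simp only [Pi.neg_apply, mul_neg] at hzqy
    rcases hzqy with h | h
    · left; linarith only [h, mul_comm (q 0) (p 1), mul_comm (q 1) (p 0)]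
    · right; linarith only [h, mul_comm (q 0) (p 1), mul_comm (q 1) (p 0)]
  have hzqr : q 0 * r 1 - q 1 * r 0 = 1 ∨ q 0 * r 1 - q 1 * r 0 = -1 := by
    rw [hy32q] at hzry
    simp only [Pi.neg_apply, mul_neg] at hzry
    rcases hzry with h | h
    · left; linarith only [h, mul_comm (r 0) (q 1), mul_comm (r 1) (q 0)]
    · right; linarith only [h, mul_comm (r 0) (q 1), mul_comm (r 1) (q 0)]
  have hzrs : r 0 * s 1 - r 1 * s 0 = 1 ∨ r 0 * s 1 - r 1 * s 0 = -1 := by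
    rw [hy43r] at hzsy
    simp only [Pi.neg_apply, mul_neg] at hzsy
    rcases hzsy with h | h
    · left; linarith only [h, mul_comm (s 0) (r 1), mul_comm (s 1) (r 0)]
    · right; linarith only [h, mul_comm (s 0) (r 1), mul_comm (s 1) (r 0)]
  have hzps : p 0 * s 1 - p 1 * s 0 = 1 ∨ p 0 * s 1 - p 1 * s 0 = -1 := by
    rw [hs1s] at hzps1
    simp only [Pi.neg_apply, mul_neg] at hzps1
    rcases hzps1 with h | h
    · right; linarith only [h]
    · left; linarith only [h]
  -- real vectors
  set P : E2 := castR p with hPdef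
  set Q : E2 := castR q with hQdef
  set R : E2 := castR r with hRdef
  set S1 : E2 := castR s with hSdef
  have hDpq : det2 P Q = 1 ∨ det2 P Q = -1 := by
    rcases hzpq with h | h
    · left; rw [hPdef, hQdef, det2_castR, h]; norm_num
    · right; rw [hPdef, hQdef, det2_castR, h]; norm_num
  have hDqr : det2 Q R = 1 ∨ det2 Q R = -1 := by
    rcases hzqr with h | h
    · left; rw [hQdef, hRdef, det2_castR, h]; norm_num
    · right; rw [hQdef, hRdef, det2_castR, h]; norm_num
  have hDrs : det2 R S1 = 1 ∨ det2 R S1 = -1 := by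
    rcases hzrs with h | h
    · left; rw [hRdef, hSdef, det2_castR, h]; norm_num
    · right; rw [hRdef, hSdef, det2_castR, h]; norm_num
  have hDps : det2 P S1 = 1 ∨ det2 P S1 = -1 := by
    rcases hzps with h | h
    · left; rw [hPdef, hSdef, det2_castR, h]; norm_num
    · right; rw [hPdef, hSdef, det2_castR, h]; norm_num
  have hDpq0 : det2 P Q ≠ 0 := by rcases hDpq with h | h <;> rw [h] <;> norm_num
  have hD0' : P 0 * Q 1 - P 1 * Q 0 ≠ 0 := by simpa [det2] using hDpq0
  obtain ⟨al, hal⟩ : ∃ x : ℝ, x = det2 R Q / det2 P Q := ⟨_, rfl⟩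
  obtain ⟨be, hbe⟩ : ∃ x : ℝ, x = det2 P R / det2 P Q := ⟨_, rfl⟩
  obtain ⟨ga, hga⟩ : ∃ x : ℝ, x = det2 S1 Q / det2 P Q := ⟨_, rfl⟩
  obtain ⟨de, hde⟩ : ∃ x : ℝ, x = det2 P S1 / det2 P Q := ⟨_, rfl⟩
  have hco0R : R 0 = al * P 0 + be * Q 0 := by
    rw [hal, hbe]; simp only [det2]; rw [div_mul_eq_mul_div, div_mul_eq_mul_div, ← add_div, eq_div_iff hD0']; ring
  have hco1R : R 1 = al * P 1 + be * Q 1 := by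
    rw [hal, hbe]; simp only [det2]; rw [div_mul_eq_mul_div, div_mul_eq_mul_div, ← add_div, eq_div_iff hD0']; ring
  have hco0S : S1 0 = ga * P 0 + de * Q 0 := by
    rw [hga, hde]; simp only [det2]; rw [div_mul_eq_mul_div, div_mul_eq_mul_div, ← add_div, eq_div_iff hD0']; ring
  have hco1S : S1 1 = ga * P 1 + de * Q 1 := by
    rw [hga, hde]; simp only [det2]; rw [div_mul_eq_mul_div, div_mul_eq_mul_div, ← add_div, eq_div_iff hD0']; ring
  have hcoR : ∀ j, R j = al * P j + be * Q j := by
    intro j; fin_cases j; exacts [hco0R, hco1R]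
  have hcoS : ∀ j, S1 j = ga * P j + de * Q j := by
    intro j; fin_cases j; exacts [hco0S, hco1S]
  have hRexp : R = al • P + be • Q := by
    funext j
    simp only [Pi.add_apply, Pi.smul_apply, smul_eq_mul]
    exact hcoR j
  have hSexp : S1 = ga • P + de • Q := by
    funext j
    simp only [Pi.add_apply, Pi.smul_apply, smul_eq_mul]
    exact hcoS j
  -- determinant expansions
  have cQR : det2 Q R = -(al * det2 P Q) := by
    simp only [det2]; rw [hco0R, hco1R]; ring
  have cPS : det2 P S1 = de * det2 P Q := by
    simp only [det2]; rw [hco0S, hco1S]; ring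
  have cRS : det2 R S1 = (al * de - be * ga) * det2 P Q := by
    simp only [det2]; rw [hco0R, hco1R, hco0S, hco1S]; ring
  -- memberships in C
  have hv1C := vertex_mem hv1
  have hv2C := vertex_mem hv2
  have hv3C := vertex_mem hv3
  have hv4C := vertex_mem hv4
  -- functional of edge Fa
  obtain ⟨u1, hu1m⟩ := hFae.1
  have hm1' : v1 ∈ maxFace _ u1 := hu1m ▸ hv1Fa
  have hm2' : v2 ∈ maxFace _ u1 := hu1m ▸ hv2Fa
  have hc12 : u1 v1 = u1 v2 := le_antisymm (hm2'.2 v1 hm1'.1) (hm1'.2 v2 hm2'.1)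
  have hs3 : u1 v3 < u1 v1 :=
    edge_sep hu1m hFaseg hv3C hv3 hv31 hv32 hv1C hv2C hv1Fa
  have hs4 : u1 v4 < u1 v1 :=
    edge_sep hu1m hFaseg hv4C hv4 hv41 (Ne.symm hv24) hv1C hv2C hv1Fa
  have hu1P : u1 P = 0 := by
    have e21 : u1 v2 - u1 v1 = l1 * u1 P := by
      rw [← map_sub, hl1e, map_smul, smul_eq_mul]
    have h0 : l1 * u1 P = 0 := by rw [← e21, hc12]; ring
    exact (mul_eq_zero.1 h0).resolve_left (ne_of_gt hl1)
  have hu1Q : u1 Q < 0 := by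
    have e31 : u1 v3 - u1 v1 = l1 * u1 P + l2 * u1 Q := by
      have hsum : v3 - v1 = l1 • P + l2 • Q := by
        have h' : v3 - v1 = (v2 - v1) + (v3 - v2) := by abel
        rw [h', hl1e, hl2e]
      rw [← map_sub, hsum, map_add, map_smul, map_smul, smul_eq_mul, smul_eq_mul]
    rw [hu1P, mul_zero, zero_add] at e31
    by_contra hcon
    push_neg at hcon
    have hx : 0 ≤ l2 * u1 Q := mul_nonneg (le_of_lt hl2) hcon
    linarith only [e31, hs3, hx]
  have hu1S : 0 < u1 S1 := by
    have e41 : u1 v4 - u1 v1 = -(l4 * u1 S1) := by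
      have h' : v4 - v1 = -(l4 • S1) := by rw [← hl4e]; abel
      rw [← map_sub, h', map_neg, map_smul, smul_eq_mul]
    by_contra hcon
    push_neg at hcon
    have hx : l4 * u1 S1 ≤ 0 := mul_nonpos_of_nonneg_of_nonpos (le_of_lt hl4) hcon
    linarith only [e41, hs4, hx]
  have hu1Sval : u1 S1 = ga * u1 P + de * u1 Q := by
    rw [hSexp, map_add, map_smul, map_smul, smul_eq_mul, smul_eq_mul]
  have hde_neg : de < 0 := by
    by_contra hcon
    push_neg at hcon
    have hx : de * u1 Q ≤ 0 := mul_nonpos_of_nonneg_of_nonpos hcon (le_of_lt hu1Q)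
    rw [hu1Sval, hu1P, mul_zero, zero_add] at hu1S
    linarith only [hu1S, hx]
  have hde1 : de = -1 := by
    rcases hDps with h | h <;> rcases hDpq with h' | h' <;> rw [h, h'] at cPS <;>
      ring_nf at cPS <;> linarith only [cPS, hde_neg]
  -- functional of edge Eb
  obtain ⟨u2, hu2m⟩ := hEbe.1
  have hn2 : v2 ∈ maxFace _ u2 := hu2m ▸ hv2Eb
  have hn3 : v3 ∈ maxFace _ u2 := hu2m ▸ hv3Eb
  have hc23 : u2 v2 = u2 v3 := le_antisymm (hn3.2 v2 hn2.1) (hn2.2 v3 hn3.1)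
  have ht1 : u2 v1 < u2 v2 :=
    edge_sep hu2m hEbseg hv1C hv1 (Ne.symm hv21) (Ne.symm hv31) hv2C hv3C hv2Eb
  have ht4 : u2 v4 < u2 v2 :=
    edge_sep hu2m hEbseg hv4C hv4 (Ne.symm hv24) (Ne.symm hv34) hv2C hv3C hv2Eb
  have hu2Q : u2 Q = 0 := by
    have e32 : u2 v3 - u2 v2 = l2 * u2 Q := by
      rw [← map_sub, hl2e, map_smul, smul_eq_mul]
    have h0 : l2 * u2 Q = 0 := by rw [← e32, hc23]; ring
    exact (mul_eq_zero.1 h0).resolve_left (ne_of_gt hl2)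
  have hu2P : 0 < u2 P := by
    have e12 : u2 v1 - u2 v2 = -(l1 * u2 P) := by
      have h' : v1 - v2 = -(l1 • P) := by rw [← hl1e]; abel
      rw [← map_sub, h', map_neg, map_smul, smul_eq_mul]
    by_contra hcon
    push_neg at hcon
    have hx : l1 * u2 P ≤ 0 := mul_nonpos_of_nonneg_of_nonpos (le_of_lt hl1) hcon
    linarith only [e12, ht1, hx]
  have hu2R : u2 R < 0 := by
    have e42 : u2 v4 - u2 v2 = l2 * u2 Q + l3 * u2 R := by
      have hsum : v4 - v2 = l2 • Q + l3 • R := by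
        have h' : v4 - v2 = (v3 - v2) + (v4 - v3) := by abel
        rw [h', hl2e, hl3e]
      rw [← map_sub, hsum, map_add, map_smul, map_smul, smul_eq_mul, smul_eq_mul]
    rw [hu2Q, mul_zero, zero_add] at e42
    by_contra hcon
    push_neg at hcon
    have hx : 0 ≤ l3 * u2 R := mul_nonneg (le_of_lt hl3) hcon
    linarith only [e42, ht4, hx]
  have hu2Rval : u2 R = al * u2 P + be * u2 Q := by
    rw [hRexp, map_add, map_smul, map_smul, smul_eq_mul, smul_eq_mul]
  have hal_neg : al < 0 := by
    rw [hu2Rval, hu2Q, mul_zero, add_zero] at hu2R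
    by_contra hcon
    push_neg at hcon
    have hx : 0 ≤ al * u2 P := mul_nonneg hcon (le_of_lt hu2P)
    linarith only [hu2R, hx]
  have hal1 : al = -1 := by
    rcases hDqr with h | h <;> rcases hDpq with h' | h' <;> rw [h, h'] at cQR <;>
      ring_nf at cQR <;> linarith only [cQR, hal_neg]
  -- functional of edge Ec
  obtain ⟨u3, hu3m⟩ := hEce.1
  have ho3 : v3 ∈ maxFace _ u3 := hu3m ▸ hv3Ec
  have ho4 : v4 ∈ maxFace _ u3 := hu3m ▸ hv4Ec
  have hc34 : u3 v3 = u3 v4 := le_antisymm (ho4.2 v3 ho3.1) (ho3.2 v4 ho4.1)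
  have hw2 : u3 v2 < u3 v3 :=
    edge_sep hu3m hEcseg hv2C hv2 (Ne.symm hv32) hv24 hv3C hv4C hv3Ec
  have hw1 : u3 v1 < u3 v3 :=
    edge_sep hu3m hEcseg hv1C hv1 (Ne.symm hv31) (Ne.symm hv41) hv3C hv4C hv3Ec
  have hu3R : u3 R = 0 := by
    have e43 : u3 v4 - u3 v3 = l3 * u3 R := by
      rw [← map_sub, hl3e, map_smul, smul_eq_mul]
    have h0 : l3 * u3 R = 0 := by rw [← e43, hc34]; ring
    exact (mul_eq_zero.1 h0).resolve_left (ne_of_gt hl3)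
  have hu3Q : 0 < u3 Q := by
    have e23 : u3 v2 - u3 v3 = -(l2 * u3 Q) := by
      have h' : v2 - v3 = -(l2 • Q) := by rw [← hl2e]; abel
      rw [← map_sub, h', map_neg, map_smul, smul_eq_mul]
    by_contra hcon
    push_neg at hcon
    have hx : l2 * u3 Q ≤ 0 := mul_nonpos_of_nonneg_of_nonpos (le_of_lt hl2) hcon
    linarith only [e23, hw2, hx]
  have hu3S : u3 S1 < 0 := by
    have e13 : u3 v1 - u3 v3 = l4 * u3 S1 + l3 * u3 R := by
      have hsum : v1 - v3 = l4 • S1 + l3 • R := by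
        have h' : v1 - v3 = (v1 - v4) + (v4 - v3) := by abel
        rw [h', hl4e, hl3e]
      rw [← map_sub, hsum, map_add, map_smul, map_smul, smul_eq_mul, smul_eq_mul]
    rw [hu3R, mul_zero, add_zero] at e13
    by_contra hcon
    push_neg at hcon
    have hx : 0 ≤ l4 * u3 S1 := mul_nonneg (le_of_lt hl4) hcon
    linarith only [e13, hw1, hx]
  have hu3Rval : u3 R = al * u3 P + be * u3 Q := by
    rw [hRexp, map_add, map_smul, map_smul, smul_eq_mul, smul_eq_mul]
  have hu3Sval : u3 S1 = ga * u3 P + de * u3 Q := by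
    rw [hSexp, map_add, map_smul, map_smul, smul_eq_mul, smul_eq_mul]
  have hu3P : u3 P = be * u3 Q := by
    rw [hu3Rval, hal1] at hu3R
    linarith only [hu3R]
  have hgabe : be * ga < 1 := by
    have h' : u3 S1 = (be * ga - 1) * u3 Q := by
      rw [hu3Sval, hu3P, hde1]; ring
    rw [h'] at hu3S
    by_contra hcon
    push_neg at hcon
    have hx : 0 ≤ (be * ga - 1) * u3 Q :=
      mul_nonneg (by linarith only [hcon]) (le_of_lt hu3Q)
    linarith only [hu3S, hx]
  have hbega : be * ga = 0 := by
    rw [hal1, hde1] at cRS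
    rcases hDrs with h | h <;> rcases hDpq with h' | h' <;> rw [h, h'] at cRS <;>
      ring_nf at cRS <;> linarith only [cRS, hgabe]
  -- conclusion
  rcases mul_eq_zero.1 hbega with hb0 | hg0
  · refine ⟨Fa, Ec, hFae, hEce, ?_, ?_⟩
    · intro h
      rcases hFacl v3 hv3 (h ▸ hv3Ec) with h' | h'
      exacts [hv31 h', hv32 h']
    · unfold AreParallel
      rw [hFaseg, hEcseg, direction_segment, direction_segment]
      have h21 : v2 - v1 = l1 • P := hl1e
      have h43 : v4 - v3 = l3 • R := hl3e
      rw [h21, h43, span_pos_smul (ne_of_gt hl1), span_pos_smul (ne_of_gt hl3)]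
      have hRP : R = (-1 : ℝ) • P := by
        funext j
        rw [hcoR j, hal1, hb0]
        simp
      rw [hRP, span_pos_smul (by norm_num : (-1:ℝ) ≠ 0)]
  · refine ⟨Eb, Fb, hEbe, hFbe, ?_, ?_⟩
    · intro h
      rcases hFbcl v2 hv2 (h ▸ hv2Eb) with h' | h'
      exacts [hv21 h', hv24 h']
    · unfold AreParallel
      rw [hEbseg, hFbseg, direction_segment, direction_segment]
      have h32 : v3 - v2 = l2 • Q := hl2e
      have h41 : v4 - v1 = (-l4) • S1 := by rw [neg_smul, ← hl4e]; abel
      rw [h32, h41, span_pos_smul (ne_of_gt hl2),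
        span_pos_smul (neg_ne_zero.2 (ne_of_gt hl4))]
      have hSQ : S1 = (-1 : ℝ) • Q := by
        funext j
        rw [hcoS j, hg0, hde1]
        simp
      rw [hSQ, span_pos_smul (by norm_num : (-1:ℝ) ≠ 0)]
end
end

section
/- Let P and P' be d-dimensional smooth prismatoids in ℝ^d which are Minkowski equivalent and whose tops and bottoms are parallel to the coordinate hyperplane {x : x_d = 0}. Let S_0, …, S_h be the slices of P and S'_0, …, S'_{h'} the slices of P'. If for every l ∈ {0,…,h} and every m ∈ {0,…,h'} the pair (S_l, S'_m) has the Integer Decomposition Property, then (P, P') has the Integer Decomposition Property. -/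
open Pointwise

noncomputable section

-- ===== Auxiliary lemmas =====


section HullBounds

variable {E : Type*} [AddCommGroup E] [Module ℝ E]

lemma le_on_hull (f : E →ₗ[ℝ] ℝ) {S : Set E} {M : ℝ}
    (h : ∀ v ∈ S, f v ≤ M) {y : E} (hy : y ∈ convexHull ℝ S) : f y ≤ M :=
  convexHull_min h (convex_halfSpace_le (LinearMap.isLinear f) M) hy

lemma eq_on_hull (f : E →ₗ[ℝ] ℝ) {S : Set E} {M : ℝ}
    (h : ∀ v ∈ S, f v = M) {y : E} (hy : y ∈ convexHull ℝ S) : f y = M := by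
  have h1 : f y ≤ M := le_on_hull f (fun v hv => (h v hv).le) hy
  have h2 : M ≤ f y :=
    convexHull_min (fun v hv => (h v hv).ge) (convex_halfSpace_ge (LinearMap.isLinear f) M) hy
  linarith

lemma coord_eq_on_hull {d : ℕ} (e : Fin d) {S : Set (Fin d → ℝ)} {M : ℝ}
    (h : ∀ v ∈ S, v e = M) {y : Fin d → ℝ} (hy : y ∈ convexHull ℝ S) : y e = M :=
  eq_on_hull (LinearMap.proj (R := ℝ) (φ := fun _ : Fin d => ℝ) e) h hy

end HullBounds

section MaxFaceBasics

variable {E : Type*} [AddCommGroup E] [Module ℝ E]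

lemma maxFace_subset (P : Set E) (u : E →ₗ[ℝ] ℝ) : maxFace P u ⊆ P := fun _ hx => hx.1

lemma maxFace_zero (P : Set E) : maxFace P (0 : E →ₗ[ℝ] ℝ) = P := by
  ext y; simp [maxFace]

lemma maxFace_convexHull {V : Set E} (hV : V.Finite) (u : E →ₗ[ℝ] ℝ) :
    maxFace (convexHull ℝ V) u = convexHull ℝ {v ∈ V | ∀ y ∈ V, u y ≤ u v} := by
  classical
  rcases V.eq_empty_or_nonempty with rfl | hne
  · simp [maxFace]
  obtain ⟨a, haV, ha⟩ := Set.exists_max_image V u hV hne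
  have hAval : ∀ v ∈ {v ∈ V | ∀ y ∈ V, u y ≤ u v}, u v = u a :=
    fun v hv => le_antisymm (ha v hv.1) (hv.2 a haV)
  ext p
  constructor
  · rintro ⟨hpP, hpmax⟩
    have hup : u p = u a := le_antisymm (le_on_hull u (fun v hv => ha v hv) hpP)
      (hpmax a (subset_convexHull ℝ V haV))
    rw [← hV.coe_toFinset, Finset.convexHull_eq] at hpP
    obtain ⟨wgt, hw0, hw1, hwp⟩ := hpP
    have hpsum : p = ∑ y ∈ hV.toFinset, wgt y • y := by
      rw [← hwp, Finset.centerMass_eq_of_sum_1 _ _ hw1]; rfl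
    have hup2 : u p = ∑ y ∈ hV.toFinset, wgt y * u y := by
      rw [hpsum, map_sum]; simp [smul_eq_mul]
    have key : ∀ y ∈ hV.toFinset, wgt y ≠ 0 → (∀ z ∈ V, u z ≤ u y) := by
      intro y hyt hwy
      by_contra hnot
      push_neg at hnot
      obtain ⟨z, hzV, hz⟩ := hnot
      have hylt : u y < u a := lt_of_lt_of_le hz (ha z hzV)
      have hstrict : ∑ y ∈ hV.toFinset, wgt y * u y < ∑ y ∈ hV.toFinset, wgt y * u a := by
        apply Finset.sum_lt_sum
        · intro i hi
          exact mul_le_mul_of_nonneg_left (ha i (hV.mem_toFinset.1 hi)) (hw0 i hi)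
        · exact ⟨y, hyt, mul_lt_mul_of_pos_left hylt (lt_of_le_of_ne (hw0 y hyt) (Ne.symm hwy))⟩
      rw [← Finset.sum_mul, hw1, one_mul] at hstrict
      rw [hup2] at hup
      linarith
    have : p ∈ convexHull ℝ {v ∈ V | ∀ y ∈ V, u y ≤ u v} := by
      rw [← Finset.centerMass_filter_ne_zero (w := wgt) id] at hwp
      rw [← hwp]
      apply Finset.centerMass_mem_convexHull
      · intro i hi
        exact hw0 i (Finset.mem_filter.1 hi).1
      · rw [Finset.sum_filter_ne_zero, hw1]; norm_num
      · intro i hi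
        obtain ⟨hit, hiw⟩ := Finset.mem_filter.1 hi
        exact ⟨hV.mem_toFinset.1 hit, key i hit hiw⟩
    exact this
  · intro hp
    have hpP : p ∈ convexHull ℝ V := convexHull_mono (Set.sep_subset _ _) hp
    have hup : u p = u a := eq_on_hull u hAval hp
    exact ⟨hpP, fun y hy => by rw [hup]; exact le_on_hull u (fun v hv => ha v hv) hy⟩

end MaxFaceBasics

section FaceNonempty

lemma face_nonempty {E : Type*} [NormedAddCommGroup E] [NormedSpace ℝ E] [FiniteDimensional ℝ E]
    {V : Set E} (hV : V.Finite) (hne : (convexHull ℝ V).Nonempty)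
    {F : Set E} (hF : IsFaceOf (convexHull ℝ V) F) : F.Nonempty := by
  obtain ⟨u, rfl⟩ := hF
  obtain ⟨x, hx, hmax⟩ := (hV.isCompact_convexHull ℝ).exists_isMaxOn hne
    (u.continuous_of_finiteDimensional.continuousOn)
  exact ⟨x, hx, fun y hy => hmax hy⟩

end FaceNonempty

section Dim

lemma dimSet_empty {E : Type*} [AddCommGroup E] [Module ℝ E] : dimSet (∅ : Set E) = 0 := by
  rw [dimSet, AffineSubspace.span_empty, AffineSubspace.direction_bot]
  exact finrank_bot ℝ E

lemma dim_contra {d : ℕ} (hd : 0 < d) {P : Set (Fin d → ℝ)} (hdim : dimSet P = d)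
    {e : Fin d} {r : ℝ} (h : ∀ x ∈ P, x e = r) : False := by
  set π := LinearMap.proj (R := ℝ) (φ := fun _ : Fin d => ℝ) e with hπ
  have hker : vectorSpan ℝ P ≤ LinearMap.ker π := by
    rw [vectorSpan_def]
    apply Submodule.span_le.2
    rintro v ⟨x, hx, y, hy, rfl⟩
    simp only [SetLike.mem_coe, LinearMap.mem_ker, hπ, vsub_eq_sub]
    show (x - y) e = 0
    simp [h x hx, h y hy]
  have hrange : LinearMap.range π = ⊤ := by
    rw [LinearMap.range_eq_top]
    exact fun r => ⟨fun _ => r, rfl⟩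
  have hrn := LinearMap.finrank_range_add_finrank_ker π
  rw [hrange, finrank_top, Module.finrank_self, Module.finrank_pi, Fintype.card_fin] at hrn
  have hle : dimSet P ≤ Module.finrank ℝ (LinearMap.ker π) := by
    rw [dimSet, direction_affineSpan]
    exact Submodule.finrank_mono hker
  omega

end Dim



section Extreme

variable {E : Type*} [NormedAddCommGroup E] [NormedSpace ℝ E]

lemma eq_hull_extremePoints (V : Set E) (hV : V.Finite) :
    convexHull ℝ (Set.extremePoints ℝ (convexHull ℝ V)) = convexHull ℝ V := by
  have hcomp : IsCompact (convexHull ℝ V) := hV.isCompact_convexHull ℝ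
  have h1 : closure (convexHull ℝ (Set.extremePoints ℝ (convexHull ℝ V))) = convexHull ℝ V :=
    closure_convexHull_extremePoints hcomp (convex_convexHull ℝ V)
  have hEfin : (Set.extremePoints ℝ (convexHull ℝ V)).Finite :=
    hV.subset extremePoints_convexHull_subset
  rw [← ((hEfin.isCompact_convexHull ℝ).isClosed).closure_eq]
  exact h1

lemma extremePoint_singleton_face {V : Set E} (hV : V.Finite) {z : E}
    (hz : z ∈ Set.extremePoints ℝ (convexHull ℝ V)) :
    IsFaceOf (convexHull ℝ V) {z} := by
  classical
  set P := convexHull ℝ V with hPdef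
  set Ept := Set.extremePoints ℝ P with hEptdef
  have hEfin : Ept.Finite := hV.subset extremePoints_convexHull_subset
  have hPE : convexHull ℝ Ept = P := eq_hull_extremePoints V hV
  have hzE : z ∈ Ept := hz
  have hznot : z ∉ convexHull ℝ (Ept \ {z}) := by
    intro hmem
    have hsub : Ept ⊆ convexHull ℝ (Ept \ {z}) := by
      intro v hv
      by_cases hvz : v = z
      · exact hvz ▸ hmem
      · exact subset_convexHull ℝ _ ⟨hv, hvz⟩
    have hPeq : P = convexHull ℝ (Ept \ {z}) := by
      apply le_antisymm
      · rw [← hPE]; exact convexHull_min hsub (convex_convexHull ℝ _)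
      · rw [← hPE]; exact convexHull_mono Set.diff_subset
    have hzmem : z ∈ Ept \ {z} := by
      have hz' : z ∈ Set.extremePoints ℝ (convexHull ℝ (Ept \ {z})) := by
        rw [← hPeq]; exact hz
      exact extremePoints_convexHull_subset hz'
    exact hzmem.2 rfl
  have hCcl : IsClosed (convexHull ℝ (Ept \ {z})) :=
    ((hEfin.subset Set.diff_subset).isCompact_convexHull ℝ).isClosed
  obtain ⟨f, u₀, hfl, hfz⟩ :=
    geometric_hahn_banach_closed_point (convex_convexHull ℝ _) hCcl hznot
  refine ⟨f.toLinearMap, ?_⟩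
  rw [← hPE, maxFace_convexHull hEfin]
  have hset : {v ∈ Ept | ∀ y ∈ Ept, f.toLinearMap y ≤ f.toLinearMap v} = {z} := by
    apply Set.eq_singleton_iff_unique_mem.2
    constructor
    · refine ⟨hzE, fun y hy => ?_⟩
      by_cases hyz : y = z
      · rw [hyz]
      · have := hfl y (subset_convexHull ℝ _ ⟨hy, hyz⟩)
        show f y ≤ f z
        linarith
    · rintro v ⟨hvE, hvmax⟩
      by_contra hvz
      have h1 : f v < u₀ := hfl v (subset_convexHull ℝ _ ⟨hvE, hvz⟩)
      have h2 : f.toLinearMap z ≤ f.toLinearMap v := hvmax z hzE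
      have h2' : f z ≤ f v := h2
      linarith
  rw [hset, convexHull_singleton]

end Extreme

section Prism

variable {E₁ : Type*} [AddCommGroup E₁] [Module ℝ E₁]

lemma maxFace_prod (A : Set E₁) (C : Set ℝ) (w : (E₁ × ℝ) →ₗ[ℝ] ℝ) :
    maxFace (A ×ˢ C) w =
      (maxFace A (w.comp (LinearMap.inl ℝ E₁ ℝ))) ×ˢ (maxFace C (w.comp (LinearMap.inr ℝ E₁ ℝ))) := by
  have hsplit : ∀ (a : E₁) (t : ℝ),
      w (a, t) = w.comp (LinearMap.inl ℝ E₁ ℝ) a + w.comp (LinearMap.inr ℝ E₁ ℝ) t := by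
    intro a t
    have : (a, t) = ((a, 0) : E₁ × ℝ) + (0, t) := by simp
    rw [this, map_add]
    rfl
  ext ⟨a, t⟩
  constructor
  · rintro ⟨⟨haA, htC⟩, hmax⟩
    refine ⟨⟨haA, fun y hy => ?_⟩, ⟨htC, fun s hs => ?_⟩⟩
    · have := hmax (y, t) ⟨hy, htC⟩
      rw [hsplit, hsplit] at this; linarith
    · have := hmax (a, s) ⟨haA, hs⟩
      rw [hsplit, hsplit] at this; linarith
  · rintro ⟨⟨haA, hamax⟩, ⟨htC, htmax⟩⟩
    refine ⟨⟨haA, htC⟩, ?_⟩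
    rintro ⟨y, s⟩ ⟨hy, hs⟩
    rw [hsplit, hsplit]
    exact add_le_add (hamax y hy) (htmax s hs)

lemma linMap_R_apply (g : ℝ →ₗ[ℝ] ℝ) (t : ℝ) : g t = t * g 1 := by
  conv_lhs => rw [show t = t • (1:ℝ) by simp, map_smul]
  simp [smul_eq_mul]

lemma maxFace_Icc_pos (g : ℝ →ₗ[ℝ] ℝ) (hg : 0 < g 1) :
    maxFace (Set.Icc (0:ℝ) 1) g = {1} := by
  have hG : ∀ t : ℝ, g t = t * g 1 := linMap_R_apply g
  ext t
  simp only [maxFace, Set.mem_setOf_eq, Set.mem_Icc, Set.mem_singleton_iff]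
  constructor
  · rintro ⟨⟨h0, h1⟩, hm⟩
    have h₂ := hm 1 ⟨zero_le_one, le_refl 1⟩
    rw [hG t] at h₂
    have h3 : 1 * g 1 ≤ t * g 1 := by linarith
    have h4 := le_of_mul_le_mul_right h3 hg
    linarith
  · rintro rfl
    refine ⟨⟨zero_le_one, le_refl _⟩, fun s hs => ?_⟩
    rw [hG s]
    have := mul_le_mul_of_nonneg_right hs.2 hg.le
    linarith

lemma maxFace_Icc_neg (g : ℝ →ₗ[ℝ] ℝ) (hg : g 1 < 0) :
    maxFace (Set.Icc (0:ℝ) 1) g = {0} := by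
  have hG : ∀ t : ℝ, g t = t * g 1 := linMap_R_apply g
  ext t
  simp only [maxFace, Set.mem_setOf_eq, Set.mem_Icc, Set.mem_singleton_iff]
  constructor
  · rintro ⟨⟨h0, h1⟩, hm⟩
    have h₂ := hm 0 ⟨le_refl 0, zero_le_one⟩
    rw [hG t, map_zero] at h₂
    by_contra htne
    have hpos : 0 < t := lt_of_le_of_ne h0 (Ne.symm htne)
    have := mul_neg_of_pos_of_neg hpos hg
    linarith
  · rintro rfl
    refine ⟨⟨le_refl _, zero_le_one⟩, fun s hs => ?_⟩
    rw [hG s, map_zero]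
    have := mul_le_mul_of_nonneg_left hg.le hs.1
    simpa using this

lemma maxFace_Icc_zero (g : ℝ →ₗ[ℝ] ℝ) (hg : g 1 = 0) :
    maxFace (Set.Icc (0:ℝ) 1) g = Set.Icc 0 1 := by
  have hG : ∀ t : ℝ, g t = t * g 1 := linMap_R_apply g
  ext t
  simp only [maxFace, Set.mem_setOf_eq]
  constructor
  · rintro ⟨h, _⟩; exact h
  · intro h
    refine ⟨h, fun s _ => ?_⟩
    rw [hG s, hG t, hg]
    simp

end Prism



lemma face_in_TB (d : ℕ) (hd : 0 < d) (P T B : Set (Fin d → ℝ)) (hP : IsPrismatoid d P T B)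
    {z : Fin d → ℝ} (hz : IsFaceOf P {z}) : z ∈ T ∪ B := by
  classical
  obtain ⟨hPlat, hPdim, Q, hQpoly, hQdim, φ, ⟨hT1, hTeq⟩, ⟨hB1, hBeq⟩, hpar⟩ := hP
  obtain ⟨V, hVlat, hPdef⟩ := hPlat
  set e : Fin d := lastIdx d hd with he
  have hPne : P.Nonempty := by
    rcases Set.eq_empty_or_nonempty P with hemp | hne
    · exfalso; rw [hemp, dimSet_empty] at hPdim; omega
    · exact hne
  have hfacene : ∀ F : Set (Fin d → ℝ), IsFaceOf P F → F.Nonempty := by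
    intro F hF
    rw [hPdef] at hF
    exact face_nonempty V.finite_toSet (hPdef ▸ hPne) hF
  rcases Set.eq_empty_or_nonempty Q with hQe | hQne
  · -- degenerate: Q empty, prism empty, face poset a singleton, dimension contradiction
    exfalso
    have hpris : Q ×ˢ Set.Icc (0:ℝ) 1 = ∅ := by rw [hQe]; exact Set.empty_prod
    have hsub : ∀ F : Set ((Fin (d-1) → ℝ) × ℝ), IsFaceOf (Q ×ˢ Set.Icc (0:ℝ) 1) F → F = ∅ := by
      rintro F ⟨u, rfl⟩
      rw [hpris]
      ext y; simp [maxFace]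
    have hsingle : ∀ F1 F2 : {F : Set (Fin d → ℝ) // IsFaceOf P F}, F1 = F2 := by
      intro F1 F2
      have h1 : φ.symm F1 = φ.symm F2 := by
        apply Subtype.ext
        rw [hsub _ (φ.symm F1).2, hsub _ (φ.symm F2).2]
      calc F1 = φ (φ.symm F1) := (φ.apply_symm_apply F1).symm
        _ = φ (φ.symm F2) := by rw [h1]
        _ = F2 := φ.apply_symm_apply F2
    set π := LinearMap.proj (R := ℝ) (φ := fun _ : Fin d => ℝ) e with hπ
    have hfπ : IsFaceOf P (maxFace P π) := ⟨π, rfl⟩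
    have hfP : IsFaceOf P P := ⟨0, (maxFace_zero P).symm⟩
    have hkey : maxFace P π = P := by
      have h1 : (⟨maxFace P π, hfπ⟩ : {F // IsFaceOf P F}) = ⟨P, hfP⟩ := hsingle _ _
      exact congrArg Subtype.val h1
    obtain ⟨x₀, hx₀⟩ := hPne
    have hconst : ∀ y ∈ P, y e = x₀ e := by
      intro y hy
      have hx₀' : x₀ ∈ maxFace P π := by rw [hkey]; exact hx₀
      have hy' : y ∈ maxFace P π := by rw [hkey]; exact hy
      exact le_antisymm (hx₀'.2 y hy) (hy'.2 x₀ hx₀)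
    exact dim_contra hd hPdim hconst
  · -- main case
    set f := φ.symm ⟨{z}, hz⟩ with hf
    have hφf : φ f = ⟨{z}, hz⟩ := φ.apply_symm_apply _
    obtain ⟨u, hu⟩ := f.2
    rw [maxFace_prod] at hu
    set u₁ := u.comp (LinearMap.inl ℝ (Fin (d-1) → ℝ) ℝ) with hu₁
    set u₂ := u.comp (LinearMap.inr ℝ (Fin (d-1) → ℝ) ℝ) with hu₂
    obtain ⟨VQ, hQdef⟩ := hQpoly
    have hQfin : (VQ : Set (Fin (d-1) → ℝ)).Finite := VQ.finite_toSet
    rcases lt_trichotomy (u₂ 1) 0 with hneg | hzero | hpos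
    · -- bottom: f.1 ⊆ Q ×ˢ {0}
      rw [maxFace_Icc_neg u₂ hneg] at hu
      have hle : f ≤ (⟨Q ×ˢ ({0} : Set ℝ), hB1⟩ : {F // IsFaceOf (Q ×ˢ Set.Icc (0:ℝ) 1) F}) := by
        rw [← Subtype.coe_le_coe]
        show f.1 ⊆ Q ×ˢ ({0} : Set ℝ)
        rw [hu]
        exact Set.prod_mono (maxFace_subset Q u₁) (subset_refl _)
      have := φ.monotone hle
      rw [hφf] at this
      have hsub : {z} ⊆ (φ ⟨Q ×ˢ ({0} : Set ℝ), hB1⟩).1 := this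
      rw [hBeq] at hsub
      exact Or.inr (hsub rfl)
    · -- vertical: contradiction via strictly smaller face
      exfalso
      rw [maxFace_Icc_zero u₂ hzero] at hu
      set G := maxFace Q u₁ with hG
      have hGface : IsFaceOf Q G := ⟨u₁, rfl⟩
      have hGne : G.Nonempty := by
        rw [hQdef] at hGface
        exact face_nonempty hQfin (hQdef ▸ hQne) hGface
      -- the face G ×ˢ {0}
      set w0 : ((Fin (d-1) → ℝ) × ℝ) →ₗ[ℝ] ℝ :=
        u₁.comp (LinearMap.fst ℝ (Fin (d-1) → ℝ) ℝ) - LinearMap.snd ℝ (Fin (d-1) → ℝ) ℝ with hw0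
      have hw0inl : w0.comp (LinearMap.inl ℝ (Fin (d-1) → ℝ) ℝ) = u₁ := by
        apply LinearMap.ext; intro a
        simp [hw0]
      have hw0inr : (w0.comp (LinearMap.inr ℝ (Fin (d-1) → ℝ) ℝ)) 1 = -1 := by
        simp [hw0]
      have hf0face : IsFaceOf (Q ×ˢ Set.Icc (0:ℝ) 1) (G ×ˢ ({0} : Set ℝ)) := by
        refine ⟨w0, ?_⟩
        rw [maxFace_prod, hw0inl, maxFace_Icc_neg _ (by rw [hw0inr]; norm_num), hG]
      set f0 : {F // IsFaceOf (Q ×ˢ Set.Icc (0:ℝ) 1) F} := ⟨G ×ˢ ({0} : Set ℝ), hf0face⟩ with hf0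
      have hlt : f0 < f := by
        apply lt_of_le_of_ne
        · rw [← Subtype.coe_le_coe]
          show G ×ˢ ({0} : Set ℝ) ⊆ f.1
          rw [hu]
          exact Set.prod_mono (subset_refl _) (by simp [Set.singleton_subset_iff])
        · intro heq
          obtain ⟨g₀, hg₀⟩ := hGne
          have h1 : (g₀, (1:ℝ)) ∈ f.1 := by
            rw [hu]; exact ⟨hg₀, ⟨zero_le_one, le_refl 1⟩⟩
          have h2 : (g₀, (1:ℝ)) ∈ G ×ˢ ({0} : Set ℝ) := by
            rw [show (G ×ˢ ({0} : Set ℝ)) = f0.1 from rfl, heq]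
            exact h1
          have : (1:ℝ) ∈ ({0} : Set ℝ) := h2.2
          simp at this
      have hφlt : φ f0 < φ f := φ.strictMono hlt
      rw [hφf] at hφlt
      have hsub : (φ f0).1 ⊆ {z} := hφlt.le
      have hne' : (φ f0).1.Nonempty := hfacene _ (φ f0).2
      have heq : (φ f0).1 = {z} := by
        rcases Set.subset_singleton_iff_eq.1 hsub with h | h
        · exact absurd h hne'.ne_empty
        · exact h
      have : φ f0 = ⟨{z}, hz⟩ := Subtype.ext heq
      rw [← hφf] at this
      exact hφlt.ne (by rw [this, hφf])
    · -- top: f.1 ⊆ Q ×ˢ {1}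
      rw [maxFace_Icc_pos u₂ hpos] at hu
      have hle : f ≤ (⟨Q ×ˢ ({1} : Set ℝ), hT1⟩ : {F // IsFaceOf (Q ×ˢ Set.Icc (0:ℝ) 1) F}) := by
        rw [← Subtype.coe_le_coe]
        show f.1 ⊆ Q ×ˢ ({1} : Set ℝ)
        rw [hu]
        exact Set.prod_mono (maxFace_subset Q u₁) (subset_refl _)
      have := φ.monotone hle
      rw [hφf] at this
      have hsub : {z} ⊆ (φ ⟨Q ×ˢ ({1} : Set ℝ), hT1⟩).1 := this
      rw [hTeq] at hsub
      exact Or.inl (hsub rfl)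

lemma prismatoid_cayley (d : ℕ) (hd : 0 < d) (P T B : Set (Fin d → ℝ))
    (hP : IsPrismatoid d P T B) (b hgt : ℤ) (hh : 0 ≤ hgt)
    (hB : B ⊆ {x : Fin d → ℝ | x (lastIdx d hd) = (b : ℝ)})
    (hT : T ⊆ {x : Fin d → ℝ | x (lastIdx d hd) = ((b + hgt : ℤ) : ℝ)}) :
    ∃ EB ET : Set (Fin d → ℝ), EB.Finite ∧ ET.Finite ∧ EB.Nonempty ∧ ET.Nonempty ∧
      (∀ v ∈ EB, v (lastIdx d hd) = (b : ℝ)) ∧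
      (∀ v ∈ ET, v (lastIdx d hd) = (b : ℝ) + (hgt : ℝ)) ∧
      P = convexHull ℝ (EB ∪ ET) ∧ (1:ℤ) ≤ hgt := by
  classical
  obtain ⟨V, hVlat, hPdef⟩ := hP.1
  have hPdim := hP.2.1
  set e : Fin d := lastIdx d hd with he
  set Ept := Set.extremePoints ℝ P with hEpt
  have hEfin : Ept.Finite := by
    rw [hEpt, hPdef]
    exact V.finite_toSet.subset extremePoints_convexHull_subset
  have hPE : convexHull ℝ Ept = P := by
    rw [hEpt, hPdef]
    exact eq_hull_extremePoints _ V.finite_toSet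
  have hTB : ∀ z ∈ Ept, z ∈ T ∪ B := by
    intro z hz
    apply face_in_TB d hd P T B hP
    rw [hPdef]
    apply extremePoint_singleton_face V.finite_toSet
    rw [← hPdef]
    exact hz
  set EB := Ept ∩ B with hEB
  set ET := Ept ∩ T with hET
  have hunion : EB ∪ ET = Ept := by
    apply Set.eq_of_subset_of_subset
    · rintro v (hv | hv) <;> exact hv.1
    · intro v hv
      rcases hTB v hv with h | h
      · exact Or.inr ⟨hv, h⟩
      · exact Or.inl ⟨hv, h⟩
  have hPdef2 : P = convexHull ℝ (EB ∪ ET) := by rw [hunion, hPE]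
  have hEBh : ∀ v ∈ EB, v e = (b:ℝ) := fun v hv => hB hv.2
  have hEThpre : ∀ v ∈ ET, v e = ((b + hgt : ℤ) : ℝ) := fun v hv => hT hv.2
  have hETh : ∀ v ∈ ET, v e = (b:ℝ) + (hgt:ℝ) := by
    intro v hv
    rw [hEThpre v hv]
    push_cast
    ring
  have hgt1 : (1:ℤ) ≤ hgt := by
    rcases lt_or_ge hgt 1 with hlt | hge
    · exfalso
      have hgt0 : hgt = 0 := by omega
      have hall : ∀ x ∈ P, x e = (b:ℝ) := by
        intro x hx
        rw [hPdef2] at hx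
        refine coord_eq_on_hull e ?_ hx
        rintro v (hv | hv)
        · exact hEBh v hv
        · rw [hETh v hv, hgt0]; norm_num
      exact dim_contra hd hPdim hall
    · exact hge
  have hbne : (b:ℝ) ≠ (b:ℝ) + (hgt:ℝ) := by
    have : (1:ℝ) ≤ (hgt:ℝ) := by exact_mod_cast hgt1
    linarith
  have hETne : ET.Nonempty := by
    rcases Set.eq_empty_or_nonempty ET with hemp | hne
    · exfalso
      have hall : ∀ x ∈ P, x e = (b:ℝ) := by
        intro x hx
        rw [hPdef2, hemp, Set.union_empty] at hx
        exact coord_eq_on_hull e hEBh hx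
      exact dim_contra hd hPdim hall
    · exact hne
  have hEBne : EB.Nonempty := by
    rcases Set.eq_empty_or_nonempty EB with hemp | hne
    · exfalso
      have hall : ∀ x ∈ P, x e = (b:ℝ) + (hgt:ℝ) := by
        intro x hx
        rw [hPdef2, hemp, Set.empty_union] at hx
        exact coord_eq_on_hull e hETh hx
      exact dim_contra hd hPdim hall
    · exact hne
  exact ⟨EB, ET, hEfin.subset Set.inter_subset_left, hEfin.subset Set.inter_subset_left,
    hEBne, hETne, hEBh, hETh, hPdef2, hgt1⟩



lemma maxFace_line {d : ℕ} {e : Fin d} {S1 S2 : Set (Fin d → ℝ)} (h1 : S1.Finite) (h2 : S2.Finite)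
    {β τ : ℝ} (hS1 : ∀ v ∈ S1, v e = β) (hS2 : ∀ v ∈ S2, v e = τ)
    (w : (Fin d → ℝ) →ₗ[ℝ] ℝ) (r : ℝ) {a c : Fin d → ℝ}
    (ha : a ∈ S1) (hamax : ∀ y ∈ S1, w y ≤ w a)
    (hc : c ∈ S2) (hcmax : ∀ y ∈ S2, w y ≤ w c)
    (hlt : w a + r * β < w c + r * τ) :
    maxFace (convexHull ℝ (S1 ∪ S2))
        (w + r • LinearMap.proj (R := ℝ) (φ := fun _ : Fin d => ℝ) e)
      = convexHull ℝ {v ∈ S2 | ∀ y ∈ S2, w y ≤ w v} := by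
  set u : (Fin d → ℝ) →ₗ[ℝ] ℝ :=
    w + r • LinearMap.proj (R := ℝ) (φ := fun _ : Fin d => ℝ) e with hudef
  have huval : ∀ v : Fin d → ℝ, u v = w v + r * v e := by
    intro v
    simp [hudef, LinearMap.proj_apply, smul_eq_mul]
  have huval1 : ∀ v ∈ S1, u v = w v + r * β := fun v hv => by rw [huval, hS1 v hv]
  have huval2 : ∀ v ∈ S2, u v = w v + r * τ := fun v hv => by rw [huval, hS2 v hv]
  rw [maxFace_convexHull (h1.union h2)]
  congr 1
  ext v
  simp only [Set.mem_setOf_eq]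
  constructor
  · rintro ⟨hv, hvmax⟩
    have hvS2 : v ∈ S2 := by
      rcases hv with hv1 | hv2
      · exfalso
        have hcu : u c ≤ u v := hvmax c (Or.inr hc)
        rw [huval1 v hv1, huval2 c hc] at hcu
        have := hamax v hv1
        linarith
      · exact hv2
    refine ⟨hvS2, fun y hy => ?_⟩
    have := hvmax y (Or.inr hy)
    rw [huval2 y hy, huval2 v hvS2] at this
    linarith
  · rintro ⟨hv2, hvmax⟩
    refine ⟨Or.inr hv2, ?_⟩
    rintro y (hy1 | hy2)
    · rw [huval1 y hy1, huval2 v hv2]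
      have hy' : w y ≤ w a := hamax y hy1
      have hc' : w c ≤ w v := hvmax c hc
      linarith
    · rw [huval2 y hy2, huval2 v hv2]
      have := hvmax y hy2
      linarith

lemma no_lt {d : ℕ} {e : Fin d} {P P' : Set (Fin d → ℝ)}
    {EB ET EB' ET' : Set (Fin d → ℝ)}
    (hfB : EB.Finite) (hfT : ET.Finite) (hfB' : EB'.Finite) (hfT' : ET'.Finite)
    {β η β' η' : ℝ} (hη : 0 < η) (hη' : 0 < η')
    (hhB : ∀ v ∈ EB, v e = β) (hhT : ∀ v ∈ ET, v e = β + η)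
    (hhB' : ∀ v ∈ EB', v e = β') (hhT' : ∀ v ∈ ET', v e = β' + η')
    (hPdef : P = convexHull ℝ (EB ∪ ET)) (hP'def : P' = convexHull ℝ (EB' ∪ ET'))
    (hME : MinkowskiEquivalent P P')
    (w : (Fin d → ℝ) →ₗ[ℝ] ℝ)
    {aB cT aB' cT' : Fin d → ℝ}
    (haB : aB ∈ EB) (hmB : ∀ y ∈ EB, w y ≤ w aB)
    (hcT : cT ∈ ET) (hmT : ∀ y ∈ ET, w y ≤ w cT)
    (haB' : aB' ∈ EB') (hmB' : ∀ y ∈ EB', w y ≤ w aB')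
    (hcT' : cT' ∈ ET') (hmT' : ∀ y ∈ ET', w y ≤ w cT')
    (hlt : (w aB - w cT)/η < (w aB' - w cT')/η') : False := by
  set π : (Fin d → ℝ) →ₗ[ℝ] ℝ := LinearMap.proj (R := ℝ) (φ := fun _ : Fin d => ℝ) e with hπ
  set rs : ℝ := (w aB - w cT)/η with hrs
  set rs' : ℝ := (w aB' - w cT')/η' with hrs'
  set r1 : ℝ := (rs + rs')/2 with hr1def
  set r2 : ℝ := rs' + 1 with hr2def
  have hr1a : rs < r1 := by rw [hr1def]; linarith
  have hr1b : r1 < rs' := by rw [hr1def]; linarith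
  have hr2b : rs' < r2 := by rw [hr2def]; linarith
  have cond : ∀ r : ℝ, rs < r → w aB + r * β < w cT + r * (β + η) := by
    intro r hr
    have h1 : w aB - w cT < r * η := by
      rw [hrs, div_lt_iff₀ hη] at hr
      linarith
    nlinarith [h1]
  have cond2 : ∀ r : ℝ, rs' < r → w aB' + r * β' < w cT' + r * (β' + η') := by
    intro r hr
    have h1 : w aB' - w cT' < r * η' := by
      rw [hrs', div_lt_iff₀ hη'] at hr
      linarith
    nlinarith [h1]
  have cond' : ∀ r : ℝ, r < rs' → w cT' + r * (β' + η') < w aB' + r * β' := by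
    intro r hr
    have h1 : r * η' < w aB' - w cT' := by
      rw [hrs', lt_div_iff₀ hη'] at hr
      linarith
    nlinarith [h1]
  have hT1 : maxFace P (w + r1 • π) = convexHull ℝ {v ∈ ET | ∀ y ∈ ET, w y ≤ w v} := by
    rw [hPdef]
    exact maxFace_line hfB hfT hhB hhT w r1 haB hmB hcT hmT (cond r1 hr1a)
  have hT2 : maxFace P (w + r2 • π) = convexHull ℝ {v ∈ ET | ∀ y ∈ ET, w y ≤ w v} := by
    rw [hPdef]
    exact maxFace_line hfB hfT hhB hhT w r2 haB hmB hcT hmT (cond r2 (lt_trans hr1a (lt_trans hr1b hr2b)))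
  have hPeq : maxFace P (w + r1 • π) = maxFace P (w + r2 • π) := by rw [hT1, hT2]
  have hP'eq := (hME (w + r1 • π) (w + r2 • π)).1 hPeq
  have hB1 : maxFace P' (w + r1 • π) = convexHull ℝ {v ∈ EB' | ∀ y ∈ EB', w y ≤ w v} := by
    rw [hP'def, Set.union_comm]
    exact maxFace_line hfT' hfB' hhT' hhB' w r1 hcT' hmT' haB' hmB' (cond' r1 hr1b)
  have hT2' : maxFace P' (w + r2 • π) = convexHull ℝ {v ∈ ET' | ∀ y ∈ ET', w y ≤ w v} := by
    rw [hP'def]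
    exact maxFace_line hfB' hfT' hhB' hhT' w r2 haB' hmB' hcT' hmT' (cond2 r2 hr2b)
  have hmem : aB' ∈ convexHull ℝ {v ∈ EB' | ∀ y ∈ EB', w y ≤ w v} :=
    subset_convexHull ℝ _ ⟨haB', hmB'⟩
  rw [← hB1, hP'eq, hT2'] at hmem
  have h1 : aB' e = β' + η' :=
    coord_eq_on_hull e (fun v hv => hhT' v hv.1) hmem
  have h2 : aB' e = β' := hhB' _ haB'
  linarith

lemma master_identity {d : ℕ} {e : Fin d} {P P' : Set (Fin d → ℝ)}
    {EB ET EB' ET' : Set (Fin d → ℝ)}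
    (hfB : EB.Finite) (hfT : ET.Finite) (hfB' : EB'.Finite) (hfT' : ET'.Finite)
    {β η β' η' : ℝ} (hη : 0 < η) (hη' : 0 < η')
    (hhB : ∀ v ∈ EB, v e = β) (hhT : ∀ v ∈ ET, v e = β + η)
    (hhB' : ∀ v ∈ EB', v e = β') (hhT' : ∀ v ∈ ET', v e = β' + η')
    (hPdef : P = convexHull ℝ (EB ∪ ET)) (hP'def : P' = convexHull ℝ (EB' ∪ ET'))
    (hME : MinkowskiEquivalent P P')
    (w : (Fin d → ℝ) →ₗ[ℝ] ℝ)
    {aB cT aB' cT' : Fin d → ℝ}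
    (haB : aB ∈ EB) (hmB : ∀ y ∈ EB, w y ≤ w aB)
    (hcT : cT ∈ ET) (hmT : ∀ y ∈ ET, w y ≤ w cT)
    (haB' : aB' ∈ EB') (hmB' : ∀ y ∈ EB', w y ≤ w aB')
    (hcT' : cT' ∈ ET') (hmT' : ∀ y ∈ ET', w y ≤ w cT') :
    η' * (w cT - w aB) = η * (w cT' - w aB') := by
  have hME' : MinkowskiEquivalent P' P := fun u v => (hME u v).symm
  rcases lt_trichotomy ((w aB - w cT)/η) ((w aB' - w cT')/η') with h | h | h
  · exact absurd h (fun h =>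
      no_lt hfB hfT hfB' hfT' hη hη' hhB hhT hhB' hhT' hPdef hP'def hME w
        haB hmB hcT hmT haB' hmB' hcT' hmT' h)
  · have hη0 : η ≠ 0 := ne_of_gt hη
    have hη'0 : η' ≠ 0 := ne_of_gt hη'
    field_simp at h
    linarith
  · exact absurd h (fun h =>
      no_lt hfB' hfT' hfB hfT hη' hη hhB' hhT' hhB hhT hP'def hPdef hME' w
        haB' hmB' hcT' hmT' haB hmB hcT hmT h)


set_option maxHeartbeats 1000000 in
/-- For Minkowski equivalent smooth `d`-dimensional prismatoids `P` and `P'`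
(tops and bottoms parallel to `{x : x_d = 0}`, bottoms at heights `b`, `b'` and tops at
heights `b + h`, `b' + h'`), if every pair of slices `(S_l, S'_m)` is IDP, then `(P, P')`
is IDP. -/
theorem slices_IDP_implies_prismatoids_IDP
    (d : ℕ) (hd : 0 < d)
    (P T B P' T' B' : Set (Fin d → ℝ))
    (hP : IsPrismatoid d P T B) (hP' : IsPrismatoid d P' T' B')
    (hsmooth : IsSmoothPolytope P) (hsmooth' : IsSmoothPolytope P')
    (hME : MinkowskiEquivalent P P')
    (hTpar : AreParallel T {x : Fin d → ℝ | x (lastIdx d hd) = 0})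
    (hBpar : AreParallel B {x : Fin d → ℝ | x (lastIdx d hd) = 0})
    (hT'par : AreParallel T' {x : Fin d → ℝ | x (lastIdx d hd) = 0})
    (hB'par : AreParallel B' {x : Fin d → ℝ | x (lastIdx d hd) = 0})
    (b h b' h' : ℤ) (hh : 0 ≤ h) (hh' : 0 ≤ h')
    (hB : B ⊆ {x : Fin d → ℝ | x (lastIdx d hd) = (b : ℝ)})
    (hT : T ⊆ {x : Fin d → ℝ | x (lastIdx d hd) = ((b + h : ℤ) : ℝ)})
    (hB' : B' ⊆ {x : Fin d → ℝ | x (lastIdx d hd) = (b' : ℝ)})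
    (hT' : T' ⊆ {x : Fin d → ℝ | x (lastIdx d hd) = ((b' + h' : ℤ) : ℝ)})
    (hslices : ∀ l m : ℤ, 0 ≤ l → l ≤ h → 0 ≤ m → m ≤ h' →
      IsIDPPair (P ∩ {x : Fin d → ℝ | x (lastIdx d hd) = ((b + l : ℤ) : ℝ)})
                (P' ∩ {x : Fin d → ℝ | x (lastIdx d hd) = ((b' + m : ℤ) : ℝ)})) :
    IsIDPPair P P' := by
  classical
  intro x hxlat hxmem
  set e : Fin d := lastIdx d hd with he
  obtain ⟨EB, ET, hfB, hfT, hneB, hneT, hhB, hhT, hPdef, hgt1⟩ :=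
    prismatoid_cayley d hd P T B hP b h hh hB hT
  obtain ⟨EB', ET', hfB', hfT', hneB', hneT', hhB', hhT', hP'def, hgt1'⟩ :=
    prismatoid_cayley d hd P' T' B' hP' b' h' hh' hB' hT'
  have hhpos : (0:ℝ) < (h:ℝ) := by exact_mod_cast lt_of_lt_of_le Int.zero_lt_one hgt1
  have hh'pos : (0:ℝ) < (h':ℝ) := by exact_mod_cast lt_of_lt_of_le Int.zero_lt_one hgt1'
  -- decompose x = p + q
  obtain ⟨p, hp, q, hq, hpq⟩ := Set.mem_add.1 hxmem
  -- Cayley decomposition of p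
  have hp2 : p ∈ convexJoin ℝ (convexHull ℝ EB) (convexHull ℝ ET) := by
    rw [← convexHull_union hneB hneT, ← hPdef]; exact hp
  obtain ⟨pB, hpB, pT, hpT, hpseg⟩ := mem_convexJoin.1 hp2
  rw [segment_eq_image] at hpseg
  obtain ⟨s, hs01, hps⟩ := hpseg
  rw [Set.mem_Icc] at hs01
  have hq2 : q ∈ convexJoin ℝ (convexHull ℝ EB') (convexHull ℝ ET') := by
    rw [← convexHull_union hneB' hneT', ← hP'def]; exact hq
  obtain ⟨qB, hqB, qT, hqT, hqseg⟩ := mem_convexJoin.1 hq2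
  rw [segment_eq_image] at hqseg
  obtain ⟨σ, hσ01, hqs⟩ := hqseg
  rw [Set.mem_Icc] at hσ01
  -- heights
  have hpBe : pB e = (b:ℝ) := coord_eq_on_hull e hhB hpB
  have hpTe : pT e = (b:ℝ) + (h:ℝ) := coord_eq_on_hull e hhT hpT
  have hqBe : qB e = (b':ℝ) := coord_eq_on_hull e hhB' hqB
  have hqTe : qT e = (b':ℝ) + (h':ℝ) := coord_eq_on_hull e hhT' hqT
  have hpe : p e = (b:ℝ) + s * (h:ℝ) := by
    rw [← hps]
    simp only [Pi.add_apply, Pi.smul_apply, smul_eq_mul, hpBe, hpTe]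
    ring
  have hqe : q e = (b':ℝ) + σ * (h':ℝ) := by
    rw [← hqs]
    simp only [Pi.add_apply, Pi.smul_apply, smul_eq_mul, hqBe, hqTe]
    ring
  obtain ⟨c, hc⟩ := hxlat e
  set k : ℤ := c - b - b' with hk
  have hkreal : s * (h:ℝ) + σ * (h':ℝ) = (k:ℝ) := by
    have hxe : x e = p e + q e := by rw [← hpq]; simp
    rw [hc, hpe, hqe] at hxe
    push_cast [hk]
    linarith
  -- integer bounds on k
  have hk0 : (0:ℤ) ≤ k := by
    have h1 : (0:ℝ) ≤ s * (h:ℝ) := mul_nonneg hs01.1 hhpos.le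
    have h2 : (0:ℝ) ≤ σ * (h':ℝ) := mul_nonneg hσ01.1 hh'pos.le
    have : (0:ℝ) ≤ (k:ℝ) := by linarith
    exact_mod_cast this
  have hkle : k ≤ h + h' := by
    have h1 : s * (h:ℝ) ≤ (h:ℝ) := by nlinarith [hs01.2, hhpos]
    have h2 : σ * (h':ℝ) ≤ (h':ℝ) := by nlinarith [hσ01.2, hh'pos]
    have : (k:ℝ) ≤ (h:ℝ) + (h':ℝ) := by linarith
    exact_mod_cast this
  set l : ℤ := max 0 (k - h') with hl
  set m : ℤ := k - l with hm
  have hl0 : (0:ℤ) ≤ l := le_max_left _ _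
  have hlh : l ≤ h := by omega
  have hm0 : (0:ℤ) ≤ m := by omega
  have hmh' : m ≤ h' := by omega
  set st : ℝ := (l:ℝ) / (h:ℝ) with hst
  set σt : ℝ := (m:ℝ) / (h':ℝ) with hσt
  have hsth : st * (h:ℝ) = (l:ℝ) := div_mul_cancel₀ _ (ne_of_gt hhpos)
  have hσth : σt * (h':ℝ) = (m:ℝ) := div_mul_cancel₀ _ (ne_of_gt hh'pos)
  have hst0 : 0 ≤ st := div_nonneg (by exact_mod_cast hl0) hhpos.le
  have hst1 : st ≤ 1 := by
    rw [hst, div_le_one hhpos]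
    exact_mod_cast hlh
  have hσt0 : 0 ≤ σt := div_nonneg (by exact_mod_cast hm0) hh'pos.le
  have hσt1 : σt ≤ 1 := by
    rw [hσt, div_le_one hh'pos]
    exact_mod_cast hmh'
  -- the candidate sets
  set CP : Set (Fin d → ℝ) := (1 - st) • (convexHull ℝ EB) + st • (convexHull ℝ ET) with hCP
  set CQ : Set (Fin d → ℝ) := (1 - σt) • (convexHull ℝ EB') + σt • (convexHull ℝ ET') with hCQ
  set C : Set (Fin d → ℝ) := CP + CQ with hC
  -- x ∈ C
  have hxC : x ∈ C := by
    by_contra hxnot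
    have hCconv : Convex ℝ C :=
      Convex.add
        (Convex.add ((convex_convexHull ℝ EB).smul _) ((convex_convexHull ℝ ET).smul _))
        (Convex.add ((convex_convexHull ℝ EB').smul _) ((convex_convexHull ℝ ET').smul _))
    have hCcl : IsClosed C := by
      have c1 : IsCompact CP :=
        ((hfB.isCompact_convexHull ℝ).smul _).add ((hfT.isCompact_convexHull ℝ).smul _)
      have c2 : IsCompact CQ :=
        ((hfB'.isCompact_convexHull ℝ).smul _).add ((hfT'.isCompact_convexHull ℝ).smul _)
      exact (c1.add c2).isClosed
    obtain ⟨f, u₀, hfC, hfx⟩ := geometric_hahn_banach_closed_point hCconv hCcl hxnot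
    obtain ⟨aB, haB, hmB⟩ := Set.exists_max_image EB f hfB hneB
    obtain ⟨cT, hcT, hmT⟩ := Set.exists_max_image ET f hfT hneT
    obtain ⟨aB', haB', hmB'⟩ := Set.exists_max_image EB' f hfB' hneB'
    obtain ⟨cT', hcT', hmT'⟩ := Set.exists_max_image ET' f hfT' hneT'
    have hmaster : (h':ℝ) * (f cT - f aB) = (h:ℝ) * (f cT' - f aB') := by
      have := master_identity (e := e) hfB hfT hfB' hfT' hhpos hh'pos hhB hhT hhB' hhT'
        hPdef hP'def hME f.toLinearMap haB hmB hcT hmT haB' hmB' hcT' hmT'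
      exact this
    -- f x bounded by the mixed value
    have hfpB : f pB ≤ f aB := le_on_hull f.toLinearMap hmB hpB
    have hfpT : f pT ≤ f cT := le_on_hull f.toLinearMap hmT hpT
    have hfqB : f qB ≤ f aB' := le_on_hull f.toLinearMap hmB' hqB
    have hfqT : f qT ≤ f cT' := le_on_hull f.toLinearMap hmT' hqT
    have hfp : f p ≤ (1 - s) * f aB + s * f cT := by
      rw [← hps, map_add, map_smul, map_smul, smul_eq_mul, smul_eq_mul]
      have h1 : (1 - s) * f pB ≤ (1 - s) * f aB :=
        mul_le_mul_of_nonneg_left hfpB (by linarith [hs01.2])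
      have h2 : s * f pT ≤ s * f cT := mul_le_mul_of_nonneg_left hfpT hs01.1
      linarith
    have hfq : f q ≤ (1 - σ) * f aB' + σ * f cT' := by
      rw [← hqs, map_add, map_smul, map_smul, smul_eq_mul, smul_eq_mul]
      have h1 : (1 - σ) * f qB ≤ (1 - σ) * f aB' :=
        mul_le_mul_of_nonneg_left hfqB (by linarith [hσ01.2])
      have h2 : σ * f qT ≤ σ * f cT' := mul_le_mul_of_nonneg_left hfqT hσ01.1
      linarith
    have hfxle : f x ≤ (1 - s) * f aB + s * f cT + ((1 - σ) * f aB' + σ * f cT') := by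
      rw [← hpq, map_add]
      linarith
    set ystar : Fin d → ℝ := ((1 - st) • aB + st • cT) + ((1 - σt) • aB' + σt • cT') with hystar
    have hyC : ystar ∈ C := by
      rw [hC]
      apply Set.mem_add.2
      refine ⟨(1 - st) • aB + st • cT, ?_, (1 - σt) • aB' + σt • cT', ?_, rfl⟩
      · rw [hCP]
        apply Set.mem_add.2
        exact ⟨(1 - st) • aB, Set.smul_mem_smul_set (subset_convexHull ℝ _ haB),
               st • cT, Set.smul_mem_smul_set (subset_convexHull ℝ _ hcT), rfl⟩
      · rw [hCQ]
        apply Set.mem_add.2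
        exact ⟨(1 - σt) • aB', Set.smul_mem_smul_set (subset_convexHull ℝ _ haB'),
               σt • cT', Set.smul_mem_smul_set (subset_convexHull ℝ _ hcT'), rfl⟩
    have hyval : f ystar = (1 - st) * f aB + st * f cT + ((1 - σt) * f aB' + σt * f cT') := by
      rw [hystar]
      simp only [map_add, map_smul, smul_eq_mul]
    have hlin : (st - s) * (h:ℝ) + (σt - σ) * (h':ℝ) = 0 := by
      have hlm : (l:ℝ) + (m:ℝ) = (k:ℝ) := by push_cast [hm]; ring
      have e1 : st * (h:ℝ) = (l:ℝ) := hsth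
      have e2 : σt * (h':ℝ) = (m:ℝ) := hσth
      linarith [hkreal, hlm, e1, e2]
    have hvaleq : (1 - st) * f aB + st * f cT + ((1 - σt) * f aB' + σt * f cT')
        = (1 - s) * f aB + s * f cT + ((1 - σ) * f aB' + σ * f cT') := by
      have key : (h':ℝ) * ((st - s) * (f cT - f aB) + (σt - σ) * (f cT' - f aB')) = 0 := by
        have expand : (h':ℝ) * ((st - s) * (f cT - f aB) + (σt - σ) * (f cT' - f aB'))
            = (st - s) * ((h':ℝ) * (f cT - f aB)) + (σt - σ) * (h':ℝ) * (f cT' - f aB') := by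
          ring
        rw [expand, hmaster]
        have : (st - s) * ((h:ℝ) * (f cT' - f aB')) + (σt - σ) * (h':ℝ) * (f cT' - f aB')
            = ((st - s) * (h:ℝ) + (σt - σ) * (h':ℝ)) * (f cT' - f aB') := by ring
        rw [this, hlin, zero_mul]
      have hzero : (st - s) * (f cT - f aB) + (σt - σ) * (f cT' - f aB') = 0 := by
        rcases mul_eq_zero.1 key with hc0 | hc0
        · exact absurd hc0 (ne_of_gt hh'pos)
        · exact hc0
      linarith [hzero]
    have hylt : f ystar < u₀ := hfC ystar hyC
    rw [hyval, hvaleq] at hylt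
    linarith
  -- C ⊆ slice sum; unpack membership
  obtain ⟨yP, hyP, yQ, hyQ, hyx⟩ := Set.mem_add.1 hxC
  obtain ⟨w1, hw1, w2, hw2, hw⟩ := Set.mem_add.1 hyP
  obtain ⟨a1, ha1, ha1e⟩ := Set.mem_smul_set.1 hw1
  obtain ⟨c1, hc1, hc1e⟩ := Set.mem_smul_set.1 hw2
  obtain ⟨w1', hw1', w2', hw2', hw'⟩ := Set.mem_add.1 hyQ
  obtain ⟨a1', ha1', ha1e'⟩ := Set.mem_smul_set.1 hw1'
  obtain ⟨c1', hc1', hc1e'⟩ := Set.mem_smul_set.1 hw2'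
  have hyPdef : yP = (1 - st) • a1 + st • c1 := by rw [← hw, ← ha1e, ← hc1e]
  have hyQdef : yQ = (1 - σt) • a1' + σt • c1' := by rw [← hw', ← ha1e', ← hc1e']
  have hyPP : yP ∈ P := by
    rw [hPdef, hyPdef]
    exact (convex_convexHull ℝ (EB ∪ ET))
      (convexHull_mono Set.subset_union_left ha1)
      (convexHull_mono Set.subset_union_right hc1)
      (by linarith) hst0 (by ring)
  have hyQP : yQ ∈ P' := by
    rw [hP'def, hyQdef]
    exact (convex_convexHull ℝ (EB' ∪ ET'))
      (convexHull_mono Set.subset_union_left ha1')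
      (convexHull_mono Set.subset_union_right hc1')
      (by linarith) hσt0 (by ring)
  have hyPe : yP e = ((b + l : ℤ) : ℝ) := by
    rw [hyPdef]
    simp only [Pi.add_apply, Pi.smul_apply, smul_eq_mul,
      coord_eq_on_hull e hhB ha1, coord_eq_on_hull e hhT hc1]
    push_cast
    linarith [hsth]
  have hyQe : yQ e = ((b' + m : ℤ) : ℝ) := by
    rw [hyQdef]
    simp only [Pi.add_apply, Pi.smul_apply, smul_eq_mul,
      coord_eq_on_hull e hhB' ha1', coord_eq_on_hull e hhT' hc1']
    push_cast
    linarith [hσth]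
  have hxin : x ∈ (P ∩ {y : Fin d → ℝ | y e = ((b + l : ℤ) : ℝ)}) +
      (P' ∩ {y : Fin d → ℝ | y e = ((b' + m : ℤ) : ℝ)}) :=
    Set.mem_add.2 ⟨yP, ⟨hyPP, hyPe⟩, yQ, ⟨hyQP, hyQe⟩, hyx⟩
  obtain ⟨p₁, hp₁, q₁, hq₁, hp₁lat, hq₁lat, hx₁⟩ :=
    hslices l m hl0 hlh hm0 hmh' x hxlat hxin
  exact ⟨p₁, hp₁.1, q₁, hq₁.1, hp₁lat, hq₁lat, hx₁⟩
end
end
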